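/- arXiv:1709.02215 — 4 statements merged into one kernel-verified Lean document; each statement's English description precedes it below -/
import Mathlib

section
/- Let $(Z_n)_{n\ge 1}$ be i.i.d. real-valued random variables with $E[Z_1]=\mu$ finite, and let $S_n = \sum_{i=1}^n Z_i$. Then for every $r<\mu$, $P\big(\frac{S_n}{n}\ge r \text{ for all } n=1,2,\dots\big) > 0$. -/
open MeasureTheory ProbabilityTheory Filter Real
open scoped ENNReal Topology

/-- Auxiliary: an injectively reindexed subfamily of an independent family is independent. -/
lemma aux_reindex {Ω ι κ : Type*} [MeasurableSpace Ω] {μ : Measure Ω}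
    {X : ι → Ω → ℝ} (h : iIndepFun X μ)
    {f : κ → ι} (hf : Function.Injective f) :
    iIndepFun (fun k => X (f k)) μ := by
  classical
  rw [iIndepFun_iff_measure_inter_preimage_eq_mul] at h ⊢
  intro S sets hsets
  set sets' : ι → Set ℝ := fun i => ⋂ k ∈ S.filter (fun k => f k = i), sets k with hsets'def
  have key : ∀ k ∈ S, sets' (f k) = sets k := by
    intro k hk
    have hfil : S.filter (fun k' => f k' = f k) = {k} := by
      ext k'
      simp only [Finset.mem_filter, Finset.mem_singleton]
      constructor
      · rintro ⟨_, h'⟩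
        exact hf h'
      · rintro rfl
        exact ⟨hk, rfl⟩
    have heq : sets' (f k) = ⋂ k' ∈ ({k} : Finset κ), sets k' := by
      simp only [hsets'def]
      rw [hfil]
    rw [heq]
    simp
  have hmeas : ∀ i ∈ S.image f, MeasurableSet (sets' i) := by
    intro i _
    apply MeasurableSet.biInter (Finset.countable_toSet _)
    intro k hk
    rw [Finset.mem_coe, Finset.mem_filter] at hk
    exact hsets k hk.1
  have h1 : (⋂ k ∈ S, X (f k) ⁻¹' sets k) = ⋂ i ∈ S.image f, X i ⁻¹' sets' i := by
    rw [Finset.set_biInter_finset_image]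
    exact Set.iInter₂_congr fun k hk => by rw [key k hk]
  rw [h1, h (S.image f) hmeas, Finset.prod_image (fun a _ b _ hab => hf hab)]
  exact Finset.prod_congr rfl fun k hk => by rw [key k hk]

/-- Auxiliary: the law of a finite vector of independent identically distributed random
variables is the product measure. -/
lemma aux_vec_law {Ω : Type*} [MeasureSpace Ω] [IsProbabilityMeasure (ℙ : Measure Ω)]
    {m : ℕ} {X : Fin m → Ω → ℝ} (hmeas : ∀ i, Measurable (X i))
    (hindep : iIndepFun X ℙ)
    (ν : Measure ℝ) [IsProbabilityMeasure ν] (hν : ∀ i, Measure.map (X i) ℙ = ν) :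
    Measure.map (fun ω (i : Fin m) => X i ω) ℙ = Measure.pi (fun _ => ν) := by
  refine (Measure.pi_eq fun s hs => ?_).symm
  have hvec : Measurable (fun ω (i : Fin m) => X i ω) :=
    measurable_pi_lambda _ fun i => hmeas i
  rw [Measure.map_apply hvec (MeasurableSet.univ_pi hs)]
  have hpre : (fun ω (i : Fin m) => X i ω) ⁻¹' Set.pi Set.univ s
      = ⋂ i ∈ (Finset.univ : Finset (Fin m)), X i ⁻¹' s i := by
    ext ω
    simp [Set.mem_univ_pi]
  rw [hpre, hindep.measure_inter_preimage_eq_mul Finset.univ (fun i _ => hs i)]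
  exact Finset.prod_congr rfl fun i _ => by
    rw [← Measure.map_apply (hmeas i) (hs i), hν i]

theorem stmt10
    {Ω : Type*} [MeasureSpace Ω] [IsProbabilityMeasure (ℙ : Measure Ω)]
    (Z : ℕ → Ω → ℝ) (hZmeas : ∀ n, Measurable (Z n))
    (hlaw : ∀ n, Measure.map (Z n) ℙ = Measure.map (Z 0) ℙ)
    (hindep : iIndepFun Z ℙ)
    (hint : Integrable (Z 0) ℙ)
    (μ : ℝ) (hμ : μ = ∫ ω, Z 0 ω ∂ℙ)
    (r : ℝ) (hr : r < μ) :
    0 < ℙ {ω | ∀ n : ℕ, 1 ≤ n → (n : ℝ) * r ≤ ∑ i ∈ Finset.range n, Z i ω} := by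
  classical
  -- the common law
  set ν : Measure ℝ := Measure.map (Z 0) ℙ with hνdef
  have hνprob : IsProbabilityMeasure ν := Measure.isProbabilityMeasure_map (hZmeas 0).aemeasurable
  -- Step A : find δ > 0 with positive probability that Z 0 ≥ r + δ
  obtain ⟨δ, hδpos, hp₁⟩ : ∃ δ : ℝ, 0 < δ ∧ 0 < ℙ (Z 0 ⁻¹' Set.Ici (r + δ)) := by
    by_contra hcon
    push_neg at hcon
    have hnull : ∀ k : ℕ, ℙ (Z 0 ⁻¹' Set.Ici (r + 1 / (k + 1))) = 0 := fun k =>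
      le_antisymm (hcon _ (by positivity)) zero_le
    have hsub : Z 0 ⁻¹' Set.Ioi r ⊆ ⋃ k : ℕ, Z 0 ⁻¹' Set.Ici (r + 1 / (k + 1)) := by
      intro ω hω
      obtain ⟨k, hk⟩ := exists_nat_one_div_lt (sub_pos.2 (Set.mem_preimage.1 hω))
      exact Set.mem_iUnion.2 ⟨k, by
        simp only [Set.mem_preimage, Set.mem_Ici]
        linarith⟩
    have hnull' : ℙ (Z 0 ⁻¹' Set.Ioi r) = 0 :=
      measure_mono_null hsub (measure_iUnion_null hnull)
    have hae : ∀ᵐ ω ∂ℙ, Z 0 ω ≤ r := by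
      rw [ae_iff]
      convert hnull' using 2
      ext ω
      simp [not_le]
    have : μ ≤ r := by
      rw [hμ]
      calc ∫ ω, Z 0 ω ∂ℙ ≤ ∫ _, r ∂ℙ := integral_mono_ae hint (integrable_const r) hae
        _ = r := by simp
    linarith
  -- Step B : strong law of large numbers gives some C with positive probability that
  -- all partial sums stay above the line `n r - C`.
  have hident : ∀ i, IdentDistrib (Z i) (Z 0) ℙ ℙ := fun i =>
    ⟨(hZmeas i).aemeasurable, (hZmeas 0).aemeasurable, hlaw i⟩
  have hpair : Pairwise (Function.onFun (IndepFun · · ℙ) Z) := fun i j hij => hindep.indepFun hij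
  have slln := strong_law_ae_real Z hint hpair hident
  rw [← hμ] at slln
  set G : ℕ → Set Ω :=
    fun C => {ω | ∀ n : ℕ, ((n : ℝ) + 1) * r - C ≤ ∑ i ∈ Finset.range (n + 1), Z i ω} with hGdef
  have hsummeas : ∀ (k n : ℕ), Measurable (fun ω => ∑ i ∈ Finset.range (n + 1), Z (k + i) ω) :=
    fun k n => Finset.measurable_sum _ fun i _ => hZmeas (k + i)
  have hGmeas : ∀ C, MeasurableSet (G C) := by
    intro C
    have : G C = ⋂ n : ℕ,
        {ω | ((n : ℝ) + 1) * r - C ≤ ∑ i ∈ Finset.range (n + 1), Z (0 + i) ω} := by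
      ext ω; simp [hGdef, Nat.zero_add]
    rw [this]
    exact MeasurableSet.iInter fun n =>
      measurableSet_le measurable_const (hsummeas 0 n)
  have haeU : ∀ᵐ ω ∂ℙ, ω ∈ ⋃ C : ℕ, G C := by
    filter_upwards [slln] with ω hω
    have hev : ∀ᶠ n : ℕ in atTop, r < (∑ i ∈ Finset.range n, Z i ω) / n :=
      hω.eventually (eventually_gt_nhds hr)
    obtain ⟨M, hM⟩ := hev.exists_forall_of_atTop
    obtain ⟨b, hb⟩ : ∃ b : ℝ, ∀ n ∈ Finset.range M,
        ((n : ℝ) + 1) * r - ∑ i ∈ Finset.range (n + 1), Z i ω ≤ b := by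
      obtain ⟨b, hb⟩ := Finset.exists_le
        ((Finset.range M).image fun n : ℕ => ((n : ℝ) + 1) * r - ∑ i ∈ Finset.range (n + 1), Z i ω)
      exact ⟨b, fun n hn => hb _ (Finset.mem_image_of_mem _ hn)⟩
    refine Set.mem_iUnion.2 ⟨⌈b⌉₊, fun n => ?_⟩
    have hbC : b ≤ (⌈b⌉₊ : ℝ) := Nat.le_ceil b
    by_cases hn : M ≤ n + 1
    · have h1 := hM (n + 1) hn
      have hpos : (0 : ℝ) < ((n + 1 : ℕ) : ℝ) := by positivity
      rw [lt_div_iff₀ hpos] at h1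
      have h2 : ((n : ℝ) + 1) * r < ∑ i ∈ Finset.range (n + 1), Z i ω := by
        push_cast at h1
        linarith
      have hC0 : (0 : ℝ) ≤ (⌈b⌉₊ : ℝ) := by positivity
      linarith
    · have hnM : n ∈ Finset.range M := Finset.mem_range.2 (by omega)
      have := hb n hnM
      linarith
  obtain ⟨C, hC⟩ : ∃ C : ℕ, 0 < ℙ (G C) := by
    by_contra hcon
    push_neg at hcon
    have hnull : ∀ C : ℕ, ℙ (G C) = 0 := fun C => le_antisymm (hcon C) zero_le
    have hUnull : ℙ (⋃ C : ℕ, G C) = 0 := measure_iUnion_null hnull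
    have hcompl : ℙ ((⋃ C : ℕ, G C)ᶜ) = 0 := by
      rw [ae_iff] at haeU
      convert haeU using 2
      rfl
    have : (1 : ℝ≥0∞) ≤ 0 := by
      calc (1 : ℝ≥0∞) = ℙ (Set.univ : Set Ω) := (measure_univ).symm
        _ ≤ ℙ (⋃ C : ℕ, G C) + ℙ ((⋃ C : ℕ, G C)ᶜ) := by
            rw [← Set.union_compl_self (⋃ C : ℕ, G C)]
            exact measure_union_le _ _
        _ = 0 := by rw [hUnull, hcompl, add_zero]
    simp at this
  -- Step C : choose N with N * δ ≥ C and N ≥ 1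
  set N : ℕ := ⌈(C : ℝ) / δ⌉₊ + 1 with hNdef
  have hNδ : (C : ℝ) ≤ (N : ℝ) * δ := by
    have h1 : (C : ℝ) / δ ≤ (N : ℝ) := by
      calc (C : ℝ) / δ ≤ (⌈(C : ℝ) / δ⌉₊ : ℝ) := Nat.le_ceil _
        _ ≤ (N : ℝ) := by rw [hNdef]; push_cast; linarith
    calc (C : ℝ) = ((C : ℝ) / δ) * δ := by field_simp
      _ ≤ (N : ℝ) * δ := mul_le_mul_of_nonneg_right h1 hδpos.le
  -- the two events
  set F : Set Ω := ⋂ i ∈ Finset.range N, Z i ⁻¹' Set.Ici (r + δ) with hFdef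
  set Etail : ℕ → Set Ω := fun k =>
    ⋂ n : ℕ, {ω | ((n : ℝ) + 1) * r - C ≤ ∑ i ∈ Finset.range (n + 1), Z (k + i) ω}
    with hEtaildef
  -- finite approximations of Etail
  set E : ℕ → ℕ → Set Ω := fun k m =>
    ⋂ n ∈ Finset.range m, {ω | ((n : ℝ) + 1) * r - C ≤ ∑ i ∈ Finset.range (n + 1), Z (k + i) ω}
    with hEdef
  have hEmeas : ∀ k m, MeasurableSet (E k m) := fun k m =>
    MeasurableSet.biInter (Finset.countable_toSet _) fun n _ =>
      measurableSet_le measurable_const (hsummeas k n)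
  have hEtailmeas : ∀ k, MeasurableSet (Etail k) := fun k =>
    MeasurableSet.iInter fun n => measurableSet_le measurable_const (hsummeas k n)
  -- shift invariance of finite approximations
  have claim1 : ∀ k m, ℙ (E k m) = ℙ (E 0 m) := by
    have key : ∀ k m, ℙ (E k m) = Measure.pi (fun _ : Fin m => ν)
        (⋂ n ∈ Finset.range m, {x : Fin m → ℝ |
          ((n : ℝ) + 1) * r - C ≤ ∑ i ∈ Finset.range (n + 1),
            (if h : i < m then x ⟨i, h⟩ else 0)}) := by
      intro k m
      set B : Set (Fin m → ℝ) := ⋂ n ∈ Finset.range m, {x : Fin m → ℝ |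
          ((n : ℝ) + 1) * r - C ≤ ∑ i ∈ Finset.range (n + 1),
            (if h : i < m then x ⟨i, h⟩ else 0)} with hBdef
      have hBmeas : MeasurableSet B := by
        refine MeasurableSet.biInter (Finset.countable_toSet _) fun n _ => ?_
        refine measurableSet_le measurable_const (Finset.measurable_sum _ fun i _ => ?_)
        by_cases h : i < m
        · simp only [dif_pos h]
          exact measurable_pi_apply _
        · simp only [dif_neg h]
          exact measurable_const
      have hvecmeas : Measurable (fun ω (i : Fin m) => Z (k + (i : ℕ)) ω) :=
        measurable_pi_lambda _ fun i => hZmeas _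
      have hpre : (fun ω (i : Fin m) => Z (k + (i : ℕ)) ω) ⁻¹' B = E k m := by
        rw [hBdef, hEdef]
        simp only [Set.preimage_iInter]
        refine Set.iInter₂_congr fun n hn => ?_
        have hnm : n < m := Finset.mem_range.1 hn
        ext ω
        simp only [Set.mem_preimage, Set.mem_setOf_eq]
        have : ∑ i ∈ Finset.range (n + 1),
            (if h : i < m then Z (k + ((⟨i, h⟩ : Fin m) : ℕ)) ω else 0)
            = ∑ i ∈ Finset.range (n + 1), Z (k + i) ω := by
          refine Finset.sum_congr rfl fun i hi => ?_
          have hi' := Finset.mem_range.1 hi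
          have him : i < m := by omega
          simp [him]
        rw [this]
      have hinj : Function.Injective (fun i : Fin m => k + (i : ℕ)) := fun a b hab =>
        Fin.ext (Nat.add_left_cancel hab)
      have hsub : iIndepFun
          (fun i : Fin m => Z (k + (i : ℕ))) ℙ := aux_reindex hindep hinj
      have hlawsub : ∀ i : Fin m, Measure.map (Z (k + (i : ℕ))) ℙ = ν := fun i => hlaw _
      have hmap := aux_vec_law (fun i : Fin m => hZmeas (k + (i : ℕ))) hsub ν hlawsub
      rw [← hpre, ← Measure.map_apply hvecmeas hBmeas, hmap]
    intro k m
    rw [key k m, key 0 m]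
  -- continuity from above : ℙ (Etail k) is the limit of ℙ (E k m)
  have claim2 : ∀ k, Tendsto (fun m => ℙ (E k m)) atTop (𝓝 (ℙ (Etail k))) := by
    intro k
    have hInter : Etail k = ⋂ m, E k m := by
      ext ω
      simp only [hEtaildef, hEdef, Set.mem_iInter, Set.mem_setOf_eq, Finset.mem_range]
      constructor
      · intro h m n _
        exact h n
      · intro h n
        exact h (n + 1) n (Nat.lt_succ_self n)
    rw [hInter]
    refine tendsto_measure_iInter_atTop (fun m => (hEmeas k m).nullMeasurableSet) ?_
      ⟨0, measure_ne_top _ _⟩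
    intro m m' hmm'
    exact Set.biInter_subset_biInter_left fun n hn =>
      Finset.mem_range.2 (lt_of_lt_of_le (Finset.mem_range.1 hn) hmm')
  have hshift : ℙ (Etail N) = ℙ (Etail 0) := by
    have h1 := claim2 N
    have h2 := claim2 0
    have : (fun m => ℙ (E N m)) = fun m => ℙ (E 0 m) := funext fun m => claim1 N m
    rw [this] at h1
    exact tendsto_nhds_unique h1 h2
  have hE0G : Etail 0 = G C := by
    ext ω
    simp [hEtaildef, hGdef, Nat.zero_add]
  -- independence of F and Etail N
  have hFEindep : ℙ (F ∩ Etail N) = ℙ F * ℙ (Etail N) := by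
    set m' : ℕ → MeasurableSpace Ω :=
      fun i => MeasurableSpace.comap (Z i) Real.measurableSpace with hm'def
    have hiIndep : iIndep m' ℙ := hindep.iIndep
    have hIndep : Indep (⨆ i ∈ Set.Iio N, m' i) (⨆ i ∈ Set.Ici N, m' i) ℙ :=
      indep_iSup_of_disjoint (fun i => (hZmeas i).comap_le) hiIndep
        (Set.Iio_disjoint_Ici le_rfl)
    have hFm : MeasurableSet[⨆ i ∈ Set.Iio N, m' i] F := by
      refine MeasurableSet.biInter (Finset.countable_toSet _) fun i hi => ?_
      have hiN : i ∈ Set.Iio N := Finset.mem_range.1 (Finset.mem_coe.1 hi)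
      have hle : m' i ≤ ⨆ i ∈ Set.Iio N, m' i := le_iSup₂ (f := fun i _ => m' i) i hiN
      exact hle _ ⟨Set.Ici (r + δ), measurableSet_Ici, rfl⟩
    have hEm : MeasurableSet[⨆ i ∈ Set.Ici N, m' i] (Etail N) := by
      refine MeasurableSet.iInter fun n => ?_
      have hmeasZ : ∀ i : ℕ, Measurable[⨆ i ∈ Set.Ici N, m' i] (Z (N + i)) := by
        intro i
        rw [measurable_iff_comap_le]
        exact le_iSup₂ (f := fun i _ => m' i) (N + i) (Nat.le_add_right N i)
      have hsum : Measurable[⨆ i ∈ Set.Ici N, m' i]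
          (fun ω => ∑ i ∈ Finset.range (n + 1), Z (N + i) ω) :=
        Finset.measurable_sum _ fun i _ => hmeasZ i
      exact measurableSet_le measurable_const hsum
    exact (hIndep.indepSet_of_measurableSet hFm hEm).measure_inter_eq_mul
  -- ℙ F = p₁ ^ N
  have hFval : ℙ F = ℙ (Z 0 ⁻¹' Set.Ici (r + δ)) ^ N := by
    rw [hFdef, hindep.measure_inter_preimage_eq_mul (Finset.range N)
      (sets := fun _ => Set.Ici (r + δ)) (fun i _ => measurableSet_Ici)]
    have hfac : ∀ i, ℙ (Z i ⁻¹' Set.Ici (r + δ)) = ℙ (Z 0 ⁻¹' Set.Ici (r + δ)) := fun i => by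
      rw [← Measure.map_apply (hZmeas i) measurableSet_Ici, hlaw i,
        Measure.map_apply (hZmeas 0) measurableSet_Ici]
    rw [Finset.prod_congr rfl fun i _ => hfac i, Finset.prod_const, Finset.card_range]
  -- inclusion of the product event in the target event
  have hincl : F ∩ Etail N ⊆
      {ω | ∀ n : ℕ, 1 ≤ n → (n : ℝ) * r ≤ ∑ i ∈ Finset.range n, Z i ω} := by
    rintro ω ⟨hF, hE⟩
    have hFi : ∀ i < N, r + δ ≤ Z i ω := by
      intro i hi
      have := Set.mem_iInter₂.1 hF i (Finset.mem_range.2 hi)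
      exact this
    have hEn : ∀ n : ℕ, ((n : ℝ) + 1) * r - C ≤ ∑ i ∈ Finset.range (n + 1), Z (N + i) ω :=
      fun n => Set.mem_iInter.1 hE n
    intro n hn
    rcases le_or_gt n N with hnN | hnN
    · have hsum : (n : ℝ) * (r + δ) ≤ ∑ i ∈ Finset.range n, Z i ω := by
        calc (n : ℝ) * (r + δ) = ∑ _i ∈ Finset.range n, (r + δ) := by
              rw [Finset.sum_const, Finset.card_range, nsmul_eq_mul]
          _ ≤ ∑ i ∈ Finset.range n, Z i ω :=
              Finset.sum_le_sum fun i hi => hFi i (lt_of_lt_of_le (Finset.mem_range.1 hi) hnN)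
      have : (n : ℝ) * r ≤ (n : ℝ) * (r + δ) := by nlinarith [Nat.cast_nonneg (α := ℝ) n]
      linarith
    · set k : ℕ := n - N - 1 with hkdef
      have hnk : n = N + (k + 1) := by omega
      have hsplit : ∑ i ∈ Finset.range n, Z i ω
          = ∑ i ∈ Finset.range N, Z i ω + ∑ i ∈ Finset.range (k + 1), Z (N + i) ω := by
        rw [hnk, Finset.sum_range_add]
      have hsum1 : (N : ℝ) * (r + δ) ≤ ∑ i ∈ Finset.range N, Z i ω := by
        calc (N : ℝ) * (r + δ) = ∑ _i ∈ Finset.range N, (r + δ) := by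
              rw [Finset.sum_const, Finset.card_range, nsmul_eq_mul]
          _ ≤ ∑ i ∈ Finset.range N, Z i ω :=
              Finset.sum_le_sum fun i hi => hFi i (Finset.mem_range.1 hi)
      have hsum2 : ((k : ℝ) + 1) * r - C ≤ ∑ i ∈ Finset.range (k + 1), Z (N + i) ω := hEn k
      have hcast : (n : ℝ) = (N : ℝ) + (k : ℝ) + 1 := by
        rw [hnk]; push_cast; ring
      rw [hsplit, hcast]
      nlinarith [hNδ]
  -- conclusion
  have hEtailpos : 0 < ℙ (Etail N) := by
    rw [hshift, hE0G]
    exact hC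
  have hFpos : 0 < ℙ F := by
    rw [hFval]
    exact ENNReal.pow_pos hp₁ N
  calc (0 : ℝ≥0∞) < ℙ F * ℙ (Etail N) := ENNReal.mul_pos hFpos.ne' hEtailpos.ne'
    _ = ℙ (F ∩ Etail N) := hFEindep.symm
    _ ≤ ℙ {ω | ∀ n : ℕ, 1 ≤ n → (n : ℝ) * r ≤ ∑ i ∈ Finset.range n, Z i ω} :=
        measure_mono hincl
end

section
/- Let $r < \mu$. Then $\lim_{N\to\infty} P\big(\min_{0\le j\le N-1} S_{j,N+j} \ge N r\big) = 1$. -/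
open MeasureTheory ProbabilityTheory Filter Real

/-- The Legendre–Fenchel transform `I(r) = sup_{λ} (λ r - log E[e^{λ W}])` of the
logarithmic moment generating function of the law `P` (the supremum being taken over
those `λ` for which the moment generating function is finite; for the other `λ` the
expression is `-∞` and does not contribute to the supremum). -/
noncomputable def rateFn (P : Measure ℝ) (r : ℝ) : ℝ :=
  ⨆ t : {t : ℝ // Integrable (fun x => Real.exp (t * x)) P},
    (t.1 * r - Real.log (∫ x, Real.exp (t.1 * x) ∂P))

/-- `seg W j k ω = S_k - S_j`, the increment of the random walk with steps `W`. -/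
noncomputable def seg {Ω : Type*} (W : ℕ → Ω → ℝ) (j k : ℕ) (ω : Ω) : ℝ :=
  ∑ m ∈ Finset.Ico j k, W m ω


-- auxiliary: quadratic exponential bound
lemma exp_le_quad (u : ℝ) : Real.exp u ≤ 1 + u + u^2 * Real.exp |u| := by
  rcases le_or_gt 0 u with hu | hu
  · rw [abs_of_nonneg hu]
    have h1 : Real.exp u * (1 - u) ≤ 1 := by
      have h := Real.add_one_le_exp (-u)
      have h2 : Real.exp (-u) * Real.exp u = 1 := by rw [← Real.exp_add]; simp
      nlinarith [Real.exp_pos u]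
    nlinarith [Real.exp_pos u, mul_le_mul_of_nonneg_left h1 hu]
  · rw [abs_of_neg hu]
    have h1 : Real.exp u * (1 - u) ≤ 1 := by
      have h := Real.add_one_le_exp (-u)
      have h2 : Real.exp (-u) * Real.exp u = 1 := by rw [← Real.exp_add]; simp
      nlinarith [Real.exp_pos u]
    have h4 : u + 1 ≤ Real.exp u := Real.add_one_le_exp u
    have h5 : 1 ≤ Real.exp (-u) := by
      rw [Real.one_le_exp_iff]; linarith
    nlinarith [Real.exp_pos u, sq_nonneg u, mul_le_mul_of_nonneg_left h4 (le_of_lt (neg_pos.mpr hu))]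

lemma key_exists (P : Measure ℝ) [IsProbabilityMeasure P] (t₀ : ℝ) (ht₀ : 0 < t₀)
    (hmgfPos : Integrable (fun x => Real.exp (t₀ * x)) P)
    (hmgfNeg : Integrable (fun x => Real.exp (-t₀ * x)) P)
    (μ : ℝ) (hμ : μ = ∫ x, x ∂P) (r : ℝ) (hr : r < μ) :
    ∃ t : ℝ, 0 < t ∧ t ≤ t₀ ∧
      (∀ s : ℝ, |s| ≤ t₀ → Integrable (fun x => Real.exp (s * x)) P) ∧
      Real.exp (t * r) * ∫ x, Real.exp (-t * x) ∂P ≤ Real.exp (t * (r - μ) / 2) := by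
  set g : ℝ → ℝ := fun x => Real.exp (t₀ * x) + Real.exp (-t₀ * x) with hgdef
  have hgint : Integrable g P := hmgfPos.add hmgfNeg
  have hg_ge : ∀ x, Real.exp (t₀ * |x|) ≤ g x := by
    intro x
    rcases abs_cases x with ⟨h, _⟩ | ⟨h, _⟩ <;> rw [h] <;>
      simp only [hgdef, mul_neg, neg_mul] <;>
      nlinarith [Real.exp_pos (t₀ * x), Real.exp_pos (-(t₀ * x))]
  have hint : ∀ s : ℝ, |s| ≤ t₀ → Integrable (fun x => Real.exp (s * x)) P := by
    intro s hs
    refine hgint.mono ?_ (Filter.Eventually.of_forall fun x => ?_)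
    · exact (Real.continuous_exp.comp (continuous_const.mul continuous_id)).aestronglyMeasurable
    · have h1 : s * x ≤ t₀ * |x| := by
        calc s * x ≤ |s * x| := le_abs_self _
          _ = |s| * |x| := abs_mul _ _
          _ ≤ t₀ * |x| := mul_le_mul_of_nonneg_right hs (abs_nonneg x)
      have h2 : Real.exp (s * x) ≤ g x := le_trans (Real.exp_le_exp.mpr h1) (hg_ge x)
      rw [Real.norm_eq_abs, Real.norm_eq_abs, abs_of_nonneg (Real.exp_pos _).le,
        abs_of_nonneg (by positivity : (0:ℝ) ≤ g x)]
      exact h2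
  -- integrability of x
  have hXint : Integrable (fun x : ℝ => x) P := by
    refine (hgint.const_mul (1 / t₀)).mono
      measurable_id.aestronglyMeasurable (Filter.Eventually.of_forall fun x => ?_)
    have h1 : t₀ * |x| ≤ Real.exp (t₀ * |x|) := (Real.add_one_le_exp _).trans' (by linarith)
    have h2 := hg_ge x
    have hgpos : (0:ℝ) ≤ g x := by positivity
    rw [Real.norm_eq_abs, Real.norm_eq_abs,
      abs_of_nonneg (mul_nonneg (by positivity) hgpos)]
    calc |x| = (1 / t₀) * (t₀ * |x|) := by field_simp
      _ ≤ (1 / t₀) * g x := mul_le_mul_of_nonneg_left (by linarith) (by positivity)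
  -- integrability of x^2 * exp(t₀/2 |x|)
  have hhint : Integrable (fun x : ℝ => x ^ 2 * Real.exp (t₀ / 2 * |x|)) P := by
    refine (hgint.const_mul (16 / t₀ ^ 2)).mono
      ((continuous_pow 2).mul
        (Real.continuous_exp.comp (continuous_const.mul continuous_abs))).aestronglyMeasurable
      (Filter.Eventually.of_forall fun x => ?_)
    have hq : t₀ / 4 * |x| ≤ Real.exp (t₀ / 4 * |x|) :=
      (Real.add_one_le_exp _).trans' (by linarith)
    have hq0 : (0:ℝ) ≤ t₀ / 4 * |x| := by positivity
    have hsq : (t₀ / 4 * |x|) ^ 2 ≤ Real.exp (t₀ / 2 * |x|) := by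
      have : Real.exp (t₀ / 2 * |x|) = Real.exp (t₀ / 4 * |x|) * Real.exp (t₀ / 4 * |x|) := by
        rw [← Real.exp_add]; ring_nf
      rw [this, sq]
      exact mul_le_mul hq hq hq0 (Real.exp_pos _).le
    have hx2 : x ^ 2 ≤ 16 / t₀ ^ 2 * Real.exp (t₀ / 2 * |x|) := by
      have hx : x ^ 2 = |x| ^ 2 := (sq_abs x).symm
      rw [hx]
      have h16 : (0:ℝ) ≤ 16 / t₀ ^ 2 := by positivity
      have hkey : 16 / t₀ ^ 2 * (t₀ / 4 * |x|) ^ 2 = |x| ^ 2 := by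
        field_simp; ring
      linarith [mul_le_mul_of_nonneg_left hsq h16]
    have hprod : Real.exp (t₀ / 2 * |x|) * Real.exp (t₀ / 2 * |x|) = Real.exp (t₀ * |x|) := by
      rw [← Real.exp_add]; ring_nf
    rw [Real.norm_eq_abs, Real.norm_eq_abs, abs_of_nonneg (by positivity),
      abs_of_nonneg (by positivity : (0:ℝ) ≤ 16 / t₀ ^ 2 * g x)]
    calc x ^ 2 * Real.exp (t₀ / 2 * |x|)
        ≤ (16 / t₀ ^ 2 * Real.exp (t₀ / 2 * |x|)) * Real.exp (t₀ / 2 * |x|) :=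
          mul_le_mul_of_nonneg_right hx2 (Real.exp_pos _).le
      _ = 16 / t₀ ^ 2 * Real.exp (t₀ * |x|) := by rw [mul_assoc, hprod]
      _ ≤ 16 / t₀ ^ 2 * g x := by
          exact mul_le_mul_of_nonneg_left (hg_ge x) (by positivity)
  set C : ℝ := ∫ x, x ^ 2 * Real.exp (t₀ / 2 * |x|) ∂P with hCdef
  have hC0 : 0 ≤ C := integral_nonneg fun x => by positivity
  set t : ℝ := min (t₀ / 2) ((μ - r) / (2 * (C + 1))) with htdef
  have htpos : 0 < t := lt_min (by linarith) (div_pos (by linarith) (by linarith))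
  have ht2 : t ≤ t₀ / 2 := min_le_left _ _
  have htC : t * C ≤ (μ - r) / 2 := by
    have h1 : t ≤ (μ - r) / (2 * (C + 1)) := min_le_right _ _
    have h2 : t * C ≤ (μ - r) / (2 * (C + 1)) * C :=
      mul_le_mul_of_nonneg_right h1 hC0
    calc t * C ≤ (μ - r) / (2 * (C + 1)) * C := h2
      _ ≤ (μ - r) / 2 := by
          rw [div_mul_eq_mul_div, div_le_div_iff₀ (by linarith) (by linarith)]
          nlinarith
  refine ⟨t, htpos, by linarith, hint, ?_⟩
  -- bound the integral
  have habs : |(-t)| ≤ t₀ := by rw [abs_neg, abs_of_pos htpos]; linarith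
  have hMint : Integrable (fun x => Real.exp (-t * x)) P := hint (-t) habs
  have hRHSint : Integrable (fun x : ℝ => 1 - t * x + t ^ 2 * (x ^ 2 * Real.exp (t₀ / 2 * |x|))) P := by
    exact ((integrable_const 1).sub (hXint.const_mul t)).add (hhint.const_mul (t ^ 2))
  have hptwise : ∀ x : ℝ, Real.exp (-t * x) ≤ 1 - t * x + t ^ 2 * (x ^ 2 * Real.exp (t₀ / 2 * |x|)) := by
    intro x
    have h := exp_le_quad (-t * x)
    have habs2 : |(-t * x)| = t * |x| := by
      rw [abs_mul, abs_neg, abs_of_pos htpos]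
    have hexple : Real.exp |(-t * x)| ≤ Real.exp (t₀ / 2 * |x|) := by
      rw [habs2]
      exact Real.exp_le_exp.mpr (mul_le_mul_of_nonneg_right ht2 (abs_nonneg x))
    have hsq : (-t * x) ^ 2 = t ^ 2 * x ^ 2 := by ring
    calc Real.exp (-t * x) ≤ 1 + (-t * x) + (-t * x) ^ 2 * Real.exp |(-t * x)| := h
      _ ≤ 1 + (-t * x) + (-t * x) ^ 2 * Real.exp (t₀ / 2 * |x|) := by
          have : (0:ℝ) ≤ (-t * x) ^ 2 := sq_nonneg _
          nlinarith
      _ = 1 - t * x + t ^ 2 * (x ^ 2 * Real.exp (t₀ / 2 * |x|)) := by rw [hsq]; ring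
  have hMle : ∫ x, Real.exp (-t * x) ∂P ≤ 1 - t * μ + t ^ 2 * C := by
    have h := integral_mono hMint hRHSint hptwise
    have heq : ∫ x, (1 - t * x + t ^ 2 * (x ^ 2 * Real.exp (t₀ / 2 * |x|))) ∂P
        = 1 - t * μ + t ^ 2 * C := by
      have h1 : Integrable (fun x : ℝ => 1 - t * x) P := (integrable_const 1).sub (hXint.const_mul t)
      have h2 : Integrable (fun x : ℝ => t ^ 2 * (x ^ 2 * Real.exp (t₀ / 2 * |x|))) P :=
        hhint.const_mul _
      have h3 : Integrable (fun x : ℝ => t * x) P := hXint.const_mul t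
      rw [integral_add h1 h2, integral_sub (integrable_const 1) h3,
        integral_const, integral_const_mul, integral_const_mul]
      simp [hμ, hCdef]
    rw [heq] at h
    exact h
  have hfinal : 1 - t * μ + t ^ 2 * C ≤ Real.exp (-(t * μ) + t * (μ - r) / 2) := by
    have h1 : t ^ 2 * C = t * (t * C) := by ring
    have h2 : t * (t * C) ≤ t * ((μ - r) / 2) := mul_le_mul_of_nonneg_left htC htpos.le
    have h3 := Real.add_one_le_exp (-(t * μ) + t * (μ - r) / 2)
    nlinarith
  have hMnn : 0 ≤ ∫ x, Real.exp (-t * x) ∂P := integral_nonneg fun x => (Real.exp_pos _).le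
  calc Real.exp (t * r) * ∫ x, Real.exp (-t * x) ∂P
      ≤ Real.exp (t * r) * Real.exp (-(t * μ) + t * (μ - r) / 2) := by
        exact mul_le_mul_of_nonneg_left (hMle.trans hfinal) (Real.exp_pos _).le
    _ = Real.exp (t * r + (-(t * μ) + t * (μ - r) / 2)) := by rw [← Real.exp_add]
    _ = Real.exp (t * (r - μ) / 2) := by ring_nf

theorem stmt14
    {Ω : Type*} [MeasureSpace Ω] [IsProbabilityMeasure (ℙ : Measure Ω)]
    (W : ℕ → Ω → ℝ) (hWmeas : ∀ n, Measurable (W n))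
    (P : Measure ℝ) [IsProbabilityMeasure P]
    (hlaw : ∀ n, Measure.map (W n) ℙ = P)
    (hindep : iIndepFun W ℙ)
    (t₀ : ℝ) (ht₀ : 0 < t₀)
    (hmgfPos : Integrable (fun x => Real.exp (t₀ * x)) P)
    (hmgfNeg : Integrable (fun x => Real.exp (-t₀ * x)) P)
    (μ : ℝ) (hμ : μ = ∫ x, x ∂P)
    (r : ℝ) (hr : r < μ) :
    Tendsto (fun N : ℕ => ℙ {ω | ∀ j < N, (N : ℝ) * r ≤ seg W j (N + j) ω})
      atTop (nhds 1) := by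
  obtain ⟨t, htpos, htle, hint, hkey⟩ := key_exists P t₀ ht₀ hmgfPos hmgfNeg μ hμ r hr
  set M : ℝ := ∫ x, Real.exp (-t * x) ∂P with hM
  set c : ℝ := Real.exp (t * (r - μ) / 2) with hc
  have hc0 : 0 ≤ c := (Real.exp_pos _).le
  have hc1 : c < 1 := by
    rw [hc, Real.exp_lt_one_iff]
    have : t * (r - μ) < 0 := mul_neg_of_pos_of_neg htpos (by linarith)
    linarith
  have hMnn : 0 ≤ M := integral_nonneg fun x => (Real.exp_pos _).le
  have habs : |(-t)| ≤ t₀ := by rw [abs_neg, abs_of_pos htpos]; exact htle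
  have haesm : AEStronglyMeasurable (fun x : ℝ => Real.exp (-t * x)) P :=
    (Real.continuous_exp.comp (continuous_const.mul continuous_id)).aestronglyMeasurable
  have hintW : ∀ m : ℕ, Integrable (fun ω => Real.exp (-t * W m ω)) ℙ := by
    intro m
    have h := hint (-t) habs
    rw [← hlaw m] at h
    exact (integrable_map_measure
      (Real.continuous_exp.comp (continuous_const.mul continuous_id)).aestronglyMeasurable
      (hWmeas m).aemeasurable).mp h
  have haesm2 : ∀ ν : Measure ℝ, AEStronglyMeasurable (fun x : ℝ => Real.exp (-t * x)) ν :=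
    fun ν => Continuous.aestronglyMeasurable (by continuity)
  have hmgfW : ∀ m : ℕ, mgf (W m) ℙ (-t) = M := by
    intro m
    rw [hM, mgf, ← hlaw m, integral_map (hWmeas m).aemeasurable (haesm2 _)]
  have hsegmeas : ∀ j k : ℕ, Measurable (seg W j k) :=
    fun j k => Finset.measurable_sum _ fun m _ => hWmeas m
  -- Chernoff bound for each segment
  have hch : ∀ N j : ℕ, (ℙ {ω | seg W j (N + j) ω ≤ (N : ℝ) * r}).toReal ≤ c ^ N := by
    intro N j
    have hseg_eq : seg W j (N + j) = ∑ m ∈ Finset.Ico j (N + j), W m := by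
      funext ω; rw [Finset.sum_apply]; rfl
    have hint_sum : Integrable
        (fun ω => Real.exp (-t * (∑ m ∈ Finset.Ico j (N + j), W m) ω)) ℙ :=
      hindep.integrable_exp_mul_sum hWmeas (fun m _ => hintW m)
    have hcher := measure_le_le_exp_mul_mgf (μ := ℙ)
      (X := ∑ m ∈ Finset.Ico j (N + j), W m) (t := -t)
      ((N : ℝ) * r) (by linarith) hint_sum
    rw [hindep.mgf_sum hWmeas] at hcher
    have hprod : ∏ m ∈ Finset.Ico j (N + j), mgf (W m) ℙ (-t) = M ^ N := by
      rw [Finset.prod_congr rfl fun m _ => hmgfW m, Finset.prod_const, Nat.card_Ico]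
      congr 1
      omega
    rw [hprod] at hcher
    have hargeq : -(-t) * ((N : ℝ) * r) = (N : ℝ) * (t * r) := by ring
    calc (ℙ {ω | seg W j (N + j) ω ≤ (N : ℝ) * r}).toReal
        = (ℙ {ω | (∑ m ∈ Finset.Ico j (N + j), W m) ω ≤ (N : ℝ) * r}).toReal := by
          rw [hseg_eq]
      _ ≤ Real.exp (-(-t) * ((N : ℝ) * r)) * M ^ N := hcher
      _ = (Real.exp (t * r)) ^ N * M ^ N := by
          rw [hargeq, Real.exp_nat_mul]
      _ = (Real.exp (t * r) * M) ^ N := (mul_pow _ _ _).symm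
      _ ≤ c ^ N := pow_le_pow_left₀ (mul_nonneg (Real.exp_pos _).le hMnn) hkey N
  -- measurability of the events
  have hA : ∀ N : ℕ, MeasurableSet {ω : Ω | ∀ j < N, (N : ℝ) * r ≤ seg W j (N + j) ω} := by
    intro N
    have heq : {ω : Ω | ∀ j < N, (N : ℝ) * r ≤ seg W j (N + j) ω}
        = ⋂ j ∈ Finset.range N, {ω : Ω | (N : ℝ) * r ≤ seg W j (N + j) ω} := by
      ext ω; simp [Finset.mem_range]
    rw [heq]
    exact Finset.measurableSet_biInter _
      fun j _ => measurableSet_le measurable_const (hsegmeas _ _)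
  -- union bound on the complement
  have hcompl : ∀ N : ℕ, ℙ {ω : Ω | ∀ j < N, (N : ℝ) * r ≤ seg W j (N + j) ω}ᶜ
      ≤ ENNReal.ofReal ((N : ℝ) * c ^ N) := by
    intro N
    have hsub : {ω : Ω | ∀ j < N, (N : ℝ) * r ≤ seg W j (N + j) ω}ᶜ ⊆
        ⋃ j ∈ Finset.range N, {ω : Ω | seg W j (N + j) ω ≤ (N : ℝ) * r} := by
      intro ω hω
      simp only [Set.mem_compl_iff, Set.mem_setOf_eq, not_forall] at hω
      push_neg at hω
      obtain ⟨j, hj, hlt⟩ := hω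
      exact Set.mem_biUnion (Finset.mem_range.mpr hj) (le_of_lt hlt)
    calc ℙ {ω : Ω | ∀ j < N, (N : ℝ) * r ≤ seg W j (N + j) ω}ᶜ
        ≤ ∑ j ∈ Finset.range N, ℙ {ω : Ω | seg W j (N + j) ω ≤ (N : ℝ) * r} :=
          (measure_mono hsub).trans (measure_biUnion_finset_le _ _)
      _ ≤ ∑ j ∈ Finset.range N, ENNReal.ofReal (c ^ N) := by
          refine Finset.sum_le_sum fun j _ => ?_
          rw [← ENNReal.ofReal_toReal (measure_ne_top ℙ _)]
          exact ENNReal.ofReal_le_ofReal (hch N j)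
      _ = ENNReal.ofReal ((N : ℝ) * c ^ N) := by
          rw [Finset.sum_const, Finset.card_range, nsmul_eq_mul,
            ENNReal.ofReal_mul (Nat.cast_nonneg N), ENNReal.ofReal_natCast]
  have hzero : Tendsto (fun N : ℕ => ENNReal.ofReal ((N : ℝ) * c ^ N)) atTop (nhds 0) := by
    have h0 : Tendsto (fun N : ℕ => (N : ℝ) * c ^ N) atTop (nhds 0) :=
      tendsto_self_mul_const_pow_of_abs_lt_one (by rwa [abs_of_nonneg hc0])
    have h1 := (ENNReal.continuous_ofReal.tendsto 0).comp h0
    rw [ENNReal.ofReal_zero] at h1; exact h1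
  have hcmpl0 : Tendsto (fun N : ℕ => ℙ {ω : Ω | ∀ j < N, (N : ℝ) * r ≤ seg W j (N + j) ω}ᶜ)
      atTop (nhds 0) :=
    tendsto_of_tendsto_of_tendsto_of_le_of_le tendsto_const_nhds hzero
      (fun N => zero_le) hcompl
  have hfin : ∀ N : ℕ, ℙ {ω : Ω | ∀ j < N, (N : ℝ) * r ≤ seg W j (N + j) ω}
      = 1 - ℙ {ω : Ω | ∀ j < N, (N : ℝ) * r ≤ seg W j (N + j) ω}ᶜ := by
    intro N
    have h := prob_compl_eq_one_sub (μ := ℙ) (hA N).compl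
    rwa [compl_compl] at h
  have hmain : Tendsto
      (fun N : ℕ => 1 - ℙ {ω : Ω | ∀ j < N, (N : ℝ) * r ≤ seg W j (N + j) ω}ᶜ)
      atTop (nhds (1 - 0)) :=
    ENNReal.Tendsto.sub tendsto_const_nhds hcmpl0 (Or.inl ENNReal.one_ne_top)
  rw [tsub_zero] at hmain
  exact hmain.congr fun N => (hfin N).symm
end

section
/- Let $r\in\mathbb{R}$ and $N\ge 1$ be such that $P(S_j \ge jr \text{ for all } j=1,\dots,N) > 0$. Then for every bounded measurable function $f:\mathbb{R}^N\to\mathbb{R}$ that is nondecreasing in each coordinate, $E\big[f(W_1,\dots,W_N) \,\big|\, S_j \ge jr \text{ for all } j=1,\dots,N\big] \ge E\big[f(W_1,\dots,W_N)\big]$. -/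
open MeasureTheory ProbabilityTheory Filter Real

section aux

lemma integrable_of_bdd {α : Type*} [MeasurableSpace α] {μ : Measure α} [IsFiniteMeasure μ]
    {F : α → ℝ} (hF : Measurable F) {C : ℝ} (hC : ∀ x, |F x| ≤ C) : Integrable F μ :=
  ⟨hF.aestronglyMeasurable, HasFiniteIntegral.of_bounded (C := C)
    (Filter.Eventually.of_forall fun x => by simpa using hC x)⟩

/-- One-dimensional Harris inequality. -/
lemma harris1 (μ : Measure ℝ) [IsProbabilityMeasure μ] (F G : ℝ → ℝ)
    (hF : Measurable F) (hG : Measurable G)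
    {CF CG : ℝ} (hCF : ∀ x, |F x| ≤ CF) (hCG : ∀ x, |G x| ≤ CG)
    (mF : Monotone F) (mG : Monotone G) :
    (∫ x, F x ∂μ) * (∫ x, G x ∂μ) ≤ ∫ x, F x * G x ∂μ := by
  have hCF0 : 0 ≤ CF := (abs_nonneg _).trans (hCF 0)
  have hCG0 : 0 ≤ CG := (abs_nonneg _).trans (hCG 0)
  have hb : ∀ x y : ℝ, |F x * G y| ≤ CF * CG := fun x y => by
    rw [abs_mul]
    exact mul_le_mul (hCF x) (hCG y) (abs_nonneg _) hCF0
  set ν := μ.prod μ with hν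
  have I11 : Integrable (fun p : ℝ × ℝ => F p.1 * G p.1) ν :=
    integrable_of_bdd ((hF.comp measurable_fst).mul (hG.comp measurable_fst))
      (fun p => hb p.1 p.1)
  have I12 : Integrable (fun p : ℝ × ℝ => F p.1 * G p.2) ν :=
    integrable_of_bdd ((hF.comp measurable_fst).mul (hG.comp measurable_snd))
      (fun p => hb p.1 p.2)
  have I21 : Integrable (fun p : ℝ × ℝ => F p.2 * G p.1) ν :=
    integrable_of_bdd ((hF.comp measurable_snd).mul (hG.comp measurable_fst))
      (fun p => hb p.2 p.1)
  have I22 : Integrable (fun p : ℝ × ℝ => F p.2 * G p.2) ν :=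
    integrable_of_bdd ((hF.comp measurable_snd).mul (hG.comp measurable_snd))
      (fun p => hb p.2 p.2)
  have key : (0:ℝ) ≤ ∫ p : ℝ × ℝ, (F p.1 - F p.2) * (G p.1 - G p.2) ∂ν := by
    refine integral_nonneg fun p => ?_
    show (0:ℝ) ≤ (F p.1 - F p.2) * (G p.1 - G p.2)
    rcases le_total p.1 p.2 with h | h
    · have h1 : F p.1 - F p.2 ≤ 0 := sub_nonpos.2 (mF h)
      have h2 : G p.1 - G p.2 ≤ 0 := sub_nonpos.2 (mG h)
      have := mul_nonneg (neg_nonneg.2 h1) (neg_nonneg.2 h2)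
      have h3 : (F p.2 - F p.1) * (G p.2 - G p.1) =
          (F p.1 - F p.2) * (G p.1 - G p.2) := by ring
      simp only [neg_sub] at this
      linarith
    · exact mul_nonneg (sub_nonneg.2 (mF h)) (sub_nonneg.2 (mG h))
  have expand : (fun p : ℝ × ℝ => (F p.1 - F p.2) * (G p.1 - G p.2)) =
      fun p : ℝ × ℝ => F p.1 * G p.1 - F p.1 * G p.2 - F p.2 * G p.1 + F p.2 * G p.2 := by
    funext p; ring
  have IAB : Integrable (fun p : ℝ × ℝ => F p.1 * G p.1 - F p.1 * G p.2) ν := I11.sub I12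
  have IABC : Integrable
      (fun p : ℝ × ℝ => F p.1 * G p.1 - F p.1 * G p.2 - F p.2 * G p.1) ν := IAB.sub I21
  rw [expand, integral_add IABC I22, integral_sub IAB I21, integral_sub I11 I12] at key
  have e11 : ∫ p : ℝ × ℝ, F p.1 * G p.1 ∂ν = ∫ x, F x * G x ∂μ := by
    rw [hν, integral_prod _ I11]
    simp [integral_const]
  have e22 : ∫ p : ℝ × ℝ, F p.2 * G p.2 ∂ν = ∫ x, F x * G x ∂μ := by
    rw [hν, integral_prod _ I22]
    simp [integral_const]
  have e12 : ∫ p : ℝ × ℝ, F p.1 * G p.2 ∂ν = (∫ x, F x ∂μ) * ∫ x, G x ∂μ :=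
    integral_prod_mul F G
  have e21 : ∫ p : ℝ × ℝ, F p.2 * G p.1 ∂ν = (∫ x, G x ∂μ) * ∫ x, F x ∂μ := by
    have : (fun p : ℝ × ℝ => F p.2 * G p.1) = fun p : ℝ × ℝ => G p.1 * F p.2 := by
      funext p; ring
    rw [this]; exact integral_prod_mul G F
  rw [e11, e22, e12, e21] at key
  nlinarith [key]

lemma fin_insertNth_mono {n : ℕ} (i : Fin (n + 1)) {a a' : ℝ} {y y' : Fin n → ℝ}
    (ha : a ≤ a') (hy : y ≤ y') :
    Fin.insertNth (α := fun _ => ℝ) i a y ≤ Fin.insertNth (α := fun _ => ℝ) i a' y' := by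
  intro j
  refine Fin.succAboveCases i ?_ ?_ j
  · simpa using ha
  · intro k; simpa using hy k

/-- Harris inequality for finite products. -/
lemma harrisPi : ∀ (n : ℕ) (μ : Fin n → Measure ℝ), (∀ i, IsProbabilityMeasure (μ i)) →
    ∀ (f g : (Fin n → ℝ) → ℝ), Measurable f → Measurable g →
    ∀ (Cf Cg : ℝ), (∀ x, |f x| ≤ Cf) → (∀ x, |g x| ≤ Cg) →
    Monotone f → Monotone g →
    (∫ x, f x ∂(Measure.pi μ)) * (∫ x, g x ∂(Measure.pi μ)) ≤
      ∫ x, f x * g x ∂(Measure.pi μ) := by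
  intro n
  induction n with
  | zero =>
    intro μ hμ f g hf hg Cf Cg hCf hCg hfm hgm
    haveI : ∀ i, IsProbabilityMeasure (μ i) := hμ
    haveI : IsProbabilityMeasure (Measure.pi μ) := inferInstance
    rw [integral_unique, integral_unique, integral_unique]
    simp [measure_univ]
  | succ n ih =>
    intro μ hμ f g hf hg Cf Cg hCf hCg hfm hgm
    haveI : ∀ i, IsProbabilityMeasure (μ i) := hμ
    set ν : Fin n → Measure ℝ := fun j => μ ((0 : Fin (n+1)).succAbove j) with hνdef
    haveI : ∀ j, IsProbabilityMeasure (ν j) := fun j => hμ _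
    haveI : IsProbabilityMeasure (Measure.pi ν) := inferInstance
    haveI : IsProbabilityMeasure ((μ 0).prod (Measure.pi ν)) := inferInstance
    set e := MeasurableEquiv.piFinSuccAbove (fun _ : Fin (n+1) => ℝ) 0 with hedef
    have hmp : MeasurePreserving e (Measure.pi μ) ((μ 0).prod (Measure.pi ν)) :=
      measurePreserving_piFinSuccAbove μ 0
    have hsymm : ∀ p : ℝ × (Fin n → ℝ),
        e.symm p = (0 : Fin (n+1)).insertNth p.1 p.2 := fun p => rfl
    have key : ∀ h : (Fin (n+1) → ℝ) → ℝ, Measurable h →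
        ∫ x, h x ∂(Measure.pi μ) =
          ∫ p, h ((0 : Fin (n+1)).insertNth p.1 p.2) ∂((μ 0).prod (Measure.pi ν)) := by
      intro h hh
      have := (MeasurePreserving.symm e hmp).integral_comp
        e.symm.measurableEmbedding h
      rw [← this]
      exact (integral_congr_ae (Filter.Eventually.of_forall fun p => by rw [hsymm])).symm
    -- bounds nonneg
    have hCf0 : 0 ≤ Cf := (abs_nonneg _).trans (hCf 0)
    have hCg0 : 0 ≤ Cg := (abs_nonneg _).trans (hCg 0)
    -- sections
    set F : ℝ → ℝ := fun a => ∫ y, f ((0 : Fin (n+1)).insertNth a y) ∂(Measure.pi ν) with hFdef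
    set G : ℝ → ℝ := fun a => ∫ y, g ((0 : Fin (n+1)).insertNth a y) ∂(Measure.pi ν) with hGdef
    have hmeas2 : ∀ (h : (Fin (n+1) → ℝ) → ℝ), Measurable h →
        Measurable (fun p : ℝ × (Fin n → ℝ) => h ((0 : Fin (n+1)).insertNth p.1 p.2)) := by
      intro h hh
      have : (fun p : ℝ × (Fin n → ℝ) => h ((0 : Fin (n+1)).insertNth p.1 p.2)) =
          fun p => h (e.symm p) := by funext p; rw [hsymm]
      rw [this]; exact hh.comp e.symm.measurable
    have hFmeas : Measurable F :=
      ((hmeas2 f hf).stronglyMeasurable.integral_prod_right' (ν := Measure.pi ν)).measurable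
    have hGmeas : Measurable G :=
      ((hmeas2 g hg).stronglyMeasurable.integral_prod_right' (ν := Measure.pi ν)).measurable
    have hFbdd : ∀ a, |F a| ≤ Cf := by
      intro a
      have := norm_integral_le_of_norm_le_const (μ := Measure.pi ν)
        (f := fun y => f ((0 : Fin (n+1)).insertNth a y))
        (C := Cf) (Filter.Eventually.of_forall fun y => by
          rw [Real.norm_eq_abs]; exact hCf _)
      simpa only [probReal_univ, mul_one, Real.norm_eq_abs]
        using this
    have hGbdd : ∀ a, |G a| ≤ Cg := by
      intro a
      have := norm_integral_le_of_norm_le_const (μ := Measure.pi ν)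
        (f := fun y => g ((0 : Fin (n+1)).insertNth a y))
        (C := Cg) (Filter.Eventually.of_forall fun y => by
          rw [Real.norm_eq_abs]; exact hCg _)
      simpa only [probReal_univ, mul_one, Real.norm_eq_abs]
        using this
    have hsecint : ∀ (h : (Fin (n+1) → ℝ) → ℝ), Measurable h → ∀ (C : ℝ),
        (∀ x, |h x| ≤ C) → ∀ a : ℝ,
        Integrable (fun y => h ((0 : Fin (n+1)).insertNth a y)) (Measure.pi ν) := by
      intro h hh C hC a
      exact integrable_of_bdd ((hmeas2 h hh).comp measurable_prodMk_left)
        (fun y => hC _)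
    have hFmono : Monotone F := by
      intro a a' haa
      exact integral_mono (hsecint f hf Cf hCf a) (hsecint f hf Cf hCf a')
        (fun y => hfm (fin_insertNth_mono 0 haa le_rfl))
    have hGmono : Monotone G := by
      intro a a' haa
      exact integral_mono (hsecint g hg Cg hCg a) (hsecint g hg Cg hCg a')
        (fun y => hgm (fin_insertNth_mono 0 haa le_rfl))
    -- Fubini for f, g, fg
    have hfg_meas : Measurable (fun x => f x * g x) := hf.mul hg
    have hfg_bdd : ∀ x, |f x * g x| ≤ Cf * Cg := fun x => by
      rw [abs_mul]; exact mul_le_mul (hCf x) (hCg x) (abs_nonneg _) hCf0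
    have hIfg : Integrable
        (fun p : ℝ × (Fin n → ℝ) => (f * g) ((0 : Fin (n+1)).insertNth p.1 p.2))
        ((μ 0).prod (Measure.pi ν)) :=
      integrable_of_bdd (hmeas2 _ hfg_meas) (fun p => hfg_bdd _)
    have eq1 : ∫ x, f x * g x ∂(Measure.pi μ) =
        ∫ a, (∫ y, f ((0 : Fin (n+1)).insertNth a y) * g ((0 : Fin (n+1)).insertNth a y)
          ∂(Measure.pi ν)) ∂(μ 0) := by
      rw [key _ hfg_meas]
      exact integral_prod _ hIfg
    have eqF : ∫ x, f x ∂(Measure.pi μ) = ∫ a, F a ∂(μ 0) := by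
      rw [key f hf]
      exact integral_prod _ (integrable_of_bdd (hmeas2 f hf) (fun p => hCf _))
    have eqG : ∫ x, g x ∂(Measure.pi μ) = ∫ a, G a ∂(μ 0) := by
      rw [key g hg]
      exact integral_prod _ (integrable_of_bdd (hmeas2 g hg) (fun p => hCg _))
    -- pointwise induction hypothesis
    have hpt : ∀ a : ℝ, F a * G a ≤
        ∫ y, f ((0 : Fin (n+1)).insertNth a y) * g ((0 : Fin (n+1)).insertNth a y)
          ∂(Measure.pi ν) := by
      intro a
      refine ih ν (fun j => hμ _) _ _
        ((hmeas2 f hf).comp measurable_prodMk_left)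
        ((hmeas2 g hg).comp measurable_prodMk_left) Cf Cg
        (fun y => hCf _) (fun y => hCg _) ?_ ?_
      · intro y y' hy; exact hfm (fin_insertNth_mono 0 le_rfl hy)
      · intro y y' hy; exact hgm (fin_insertNth_mono 0 le_rfl hy)
    have hInner_meas : Measurable (fun a : ℝ =>
        ∫ y, f ((0 : Fin (n+1)).insertNth a y) * g ((0 : Fin (n+1)).insertNth a y)
          ∂(Measure.pi ν)) := by
      exact ((hmeas2 _ hfg_meas).stronglyMeasurable.integral_prod_right'
        (ν := Measure.pi ν)).measurable
    have hInner_bdd : ∀ a : ℝ, |∫ y, f ((0 : Fin (n+1)).insertNth a y) *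
        g ((0 : Fin (n+1)).insertNth a y) ∂(Measure.pi ν)| ≤ Cf * Cg := by
      intro a
      have := norm_integral_le_of_norm_le_const (μ := Measure.pi ν)
        (f := fun y => f ((0 : Fin (n+1)).insertNth a y) *
          g ((0 : Fin (n+1)).insertNth a y))
        (C := Cf * Cg) (Filter.Eventually.of_forall fun y => by
          rw [Real.norm_eq_abs]; exact hfg_bdd _)
      simpa only [probReal_univ, mul_one, Real.norm_eq_abs]
        using this
    have step1 : ∫ a, F a * G a ∂(μ 0) ≤ ∫ x, f x * g x ∂(Measure.pi μ) := by
      rw [eq1]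
      refine integral_mono ?_ ?_ hpt
      · exact integrable_of_bdd (hFmeas.mul hGmeas) (fun a => by
          rw [abs_mul]; exact mul_le_mul (hFbdd a) (hGbdd a) (abs_nonneg _) hCf0)
      · exact integrable_of_bdd hInner_meas hInner_bdd
    have step2 : (∫ a, F a ∂(μ 0)) * (∫ a, G a ∂(μ 0)) ≤ ∫ a, F a * G a ∂(μ 0) :=
      harris1 (μ 0) F G hFmeas hGmeas hFbdd hGbdd hFmono hGmono
    rw [eqF, eqG]
    exact le_trans step2 step1

lemma monotone_of_coord {n : ℕ} (f : (Fin n → ℝ) → ℝ)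
    (h : ∀ (i : Fin n) (x : Fin n → ℝ), Monotone fun t : ℝ => f (Function.update x i t)) :
    Monotone f := by
  intro x y hxy
  classical
  have key : ∀ s : Finset (Fin n), f x ≤ f (s.piecewise y x) := by
    intro s
    refine Finset.induction_on s ?_ ?_
    · simp
    · intro i t hit ih
      rw [Finset.piecewise_insert]
      have hzi : t.piecewise y x i = x i := Finset.piecewise_eq_of_notMem _ _ _ hit
      calc f x ≤ f (t.piecewise y x) := ih
      _ = f (Function.update (t.piecewise y x) i (x i)) := by
          rw [← hzi, Function.update_eq_self]
      _ ≤ f (Function.update (t.piecewise y x) i (y i)) := h i _ (hxy i)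
  simpa [Finset.piecewise_univ] using key Finset.univ

end aux

theorem stmt16
    {Ω : Type*} [MeasureSpace Ω] [IsProbabilityMeasure (ℙ : Measure Ω)]
    (W : ℕ → Ω → ℝ) (hWmeas : ∀ n, Measurable (W n))
    (hlaw : ∀ n, Measure.map (W n) ℙ = Measure.map (W 0) ℙ)
    (hindep : iIndepFun W ℙ)
    (r : ℝ) (N : ℕ) (hN : 1 ≤ N)
    (hpos : 0 < ℙ {ω | ∀ j, 1 ≤ j → j ≤ N → (j : ℝ) * r ≤ ∑ i ∈ Finset.range j, W i ω})
    (f : (Fin N → ℝ) → ℝ) (hfmeas : Measurable f)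
    (hfbdd : ∃ C : ℝ, ∀ x, |f x| ≤ C)
    (hfmono : ∀ (i : Fin N) (x : Fin N → ℝ),
      Monotone fun t : ℝ => f (Function.update x i t)) :
    ∫ ω, f (fun i : Fin N => W i ω) ∂ℙ ≤
      ∫ ω, f (fun i : Fin N => W i ω)
        ∂(ℙ[|{ω | ∀ j, 1 ≤ j → j ≤ N → (j : ℝ) * r ≤ ∑ i ∈ Finset.range j, W i ω}]) := by
  classical
  obtain ⟨C, hC⟩ := hfbdd
  set A : Set Ω :=
    {ω | ∀ j, 1 ≤ j → j ≤ N → (j : ℝ) * r ≤ ∑ i ∈ Finset.range j, W i ω} with hAdef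
  set X : Ω → (Fin N → ℝ) := fun ω i => W i ω with hXdef
  have hXmeas : Measurable X := measurable_pi_lambda _ fun i => hWmeas i
  set μs : Fin N → Measure ℝ := fun i => Measure.map (W i) ℙ with hμsdef
  haveI : ∀ i, IsProbabilityMeasure (μs i) := fun i =>
    Measure.isProbabilityMeasure_map (hWmeas i).aemeasurable
  -- the law of X is the product measure
  have hmap : Measure.map X ℙ = Measure.pi μs := by
    refine (Measure.pi_eq (μ := μs) fun s hs => ?_).symm
    rw [Measure.map_apply hXmeas (MeasurableSet.univ_pi hs)]
    set S : ℕ → Set ℝ := fun n => if h : n < N then s ⟨n, h⟩ else Set.univ with hSdef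
    have hSm : ∀ i ∈ Finset.range N, MeasurableSet (S i) := by
      intro i _
      by_cases h : i < N
      · simp only [hSdef, dif_pos h]; exact hs _
      · simp only [hSdef, dif_neg h]; exact MeasurableSet.univ
    have hset : X ⁻¹' (Set.univ.pi s) = ⋂ i ∈ Finset.range N, W i ⁻¹' (S i) := by
      ext ω
      simp only [Set.mem_preimage, Set.mem_pi, Set.mem_univ, forall_true_left,
        Set.mem_iInter, Finset.mem_range]
      constructor
      · intro h i hi
        simp only [hSdef, Set.mem_preimage, dif_pos hi]
        exact h ⟨i, hi⟩
      · intro h i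
        have := h i.1 i.2
        simpa only [hSdef, Set.mem_preimage, dif_pos i.2, Fin.eta] using this
    rw [hset, hindep.measure_inter_preimage_eq_mul (Finset.range N) hSm]
    rw [← Fin.prod_univ_eq_prod_range (fun n => ℙ (W n ⁻¹' S n)) N]
    refine Finset.prod_congr rfl fun i _ => ?_
    have hSi : S i.1 = s i := by
      simp only [hSdef, dif_pos i.2, Fin.eta]
    rw [hSi, hμsdef, Measure.map_apply (hWmeas i) (hs i)]
  -- the set B
  set B : Set (Fin N → ℝ) :=
    {x | ∀ j, 1 ≤ j → j ≤ N →
      (j : ℝ) * r ≤ ∑ i ∈ Finset.range j, (if h : i < N then x ⟨i, h⟩ else 0)} with hBdef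
  have hpre : A = X ⁻¹' B := by
    ext ω
    simp only [hAdef, hBdef, Set.mem_setOf_eq, Set.mem_preimage]
    have hsum : ∀ j, j ≤ N → (∑ i ∈ Finset.range j, W i ω) =
        ∑ i ∈ Finset.range j, (if h : i < N then X ω ⟨i, h⟩ else 0) := by
      intro j hj
      refine Finset.sum_congr rfl fun i hi => ?_
      have hiN : i < N := lt_of_lt_of_le (Finset.mem_range.1 hi) hj
      rw [dif_pos hiN]
    constructor
    · intro h j h1 h2; rw [← hsum j h2]; exact h j h1 h2
    · intro h j h1 h2; rw [hsum j h2]; exact h j h1 h2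
  have hgjmeas : ∀ j : ℕ, Measurable (fun x : Fin N → ℝ =>
      ∑ i ∈ Finset.range j, (if h : i < N then x ⟨i, h⟩ else 0)) := by
    intro j
    refine Finset.measurable_sum _ fun i _ => ?_
    by_cases h : i < N
    · simp only [dif_pos h]; exact measurable_pi_apply _
    · simp only [dif_neg h]; exact measurable_const
  have hBmeas : MeasurableSet B := by
    have hBeq : B = ⋂ j : ℕ, {x : Fin N → ℝ | 1 ≤ j → j ≤ N →
        (j : ℝ) * r ≤ ∑ i ∈ Finset.range j, (if h : i < N then x ⟨i, h⟩ else 0)} := by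
      ext x; simp only [hBdef, Set.mem_setOf_eq, Set.mem_iInter]
    rw [hBeq]
    refine MeasurableSet.iInter fun j => ?_
    by_cases h1 : 1 ≤ j ∧ j ≤ N
    · have : {x : Fin N → ℝ | 1 ≤ j → j ≤ N →
          (j : ℝ) * r ≤ ∑ i ∈ Finset.range j, (if h : i < N then x ⟨i, h⟩ else 0)} =
          {x : Fin N → ℝ |
            (j : ℝ) * r ≤ ∑ i ∈ Finset.range j, (if h : i < N then x ⟨i, h⟩ else 0)} := by
        ext x; simp [h1.1, h1.2]
      rw [this]
      exact measurableSet_le measurable_const (hgjmeas j)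
    · have : {x : Fin N → ℝ | 1 ≤ j → j ≤ N →
          (j : ℝ) * r ≤ ∑ i ∈ Finset.range j, (if h : i < N then x ⟨i, h⟩ else 0)} =
          Set.univ := by
        ext x
        simp only [Set.mem_setOf_eq, Set.mem_univ, iff_true]
        intro hj1 hj2
        exact absurd ⟨hj1, hj2⟩ h1
      rw [this]; exact MeasurableSet.univ
  -- B is an upper set
  have hBupper : ∀ x y : Fin N → ℝ, x ≤ y → x ∈ B → y ∈ B := by
    intro x y hxy hx j h1 h2
    refine le_trans (hx j h1 h2) (Finset.sum_le_sum fun i _ => ?_)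
    by_cases h : i < N
    · simp only [dif_pos h]; exact hxy _
    · simp only [dif_neg h]; exact le_refl _
  set g : (Fin N → ℝ) → ℝ := B.indicator (fun _ => (1:ℝ)) with hgdef
  have hgmeas : Measurable g := measurable_const.indicator hBmeas
  have hgbdd : ∀ x, |g x| ≤ 1 := by
    intro x
    by_cases hx : x ∈ B
    · simp [hgdef, Set.indicator_of_mem hx]
    · simp [hgdef, Set.indicator_of_notMem hx]
  have hgmono : Monotone g := by
    intro x y hxy
    by_cases hx : x ∈ B
    · have hy : y ∈ B := hBupper x y hxy hx
      simp [hgdef, Set.indicator_of_mem hx, Set.indicator_of_mem hy]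
    · rw [hgdef, Set.indicator_of_notMem hx]
      exact Set.indicator_nonneg (fun _ _ => zero_le_one) y
  have hfmono' : Monotone f := monotone_of_coord f hfmono
  -- Harris inequality
  have key : (∫ x, f x ∂(Measure.pi μs)) * (∫ x, g x ∂(Measure.pi μs)) ≤
      ∫ x, f x * g x ∂(Measure.pi μs) :=
    harrisPi N μs inferInstance f g hfmeas hgmeas C 1 hC hgbdd hfmono' hgmono
  have hgint : ∫ x, g x ∂(Measure.pi μs) = (Measure.pi μs B).toReal := by
    rw [hgdef]
    exact integral_indicator_one hBmeas
  -- measure of A equals measure of B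
  have hAB : ℙ A = Measure.pi μs B := by
    rw [hpre, ← Measure.map_apply hXmeas hBmeas, hmap]
  have hApos : 0 < (ℙ A).toReal :=
    ENNReal.toReal_pos (ne_of_gt hpos) (measure_ne_top _ _)
  -- integral transfers
  have hint1 : ∫ ω, f (fun i : Fin N => W i ω) ∂ℙ = ∫ x, f x ∂(Measure.pi μs) := by
    rw [← hmap, integral_map hXmeas.aemeasurable hfmeas.aestronglyMeasurable]
  have hcond : ∫ ω, f (fun i : Fin N => W i ω) ∂(ℙ[|A]) =
      (ℙ A).toReal⁻¹ * ∫ x, f x * g x ∂(Measure.pi μs) := by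
    rw [ProbabilityTheory.cond, integral_smul_measure, ENNReal.toReal_inv, smul_eq_mul]
    congr 1
    have hres : ∫ ω in A, f (fun i : Fin N => W i ω) ∂ℙ = ∫ x in B, f x ∂(Measure.pi μs) := by
      rw [← hmap, setIntegral_map hBmeas hfmeas.aestronglyMeasurable hXmeas.aemeasurable,
        ← hpre]
    rw [hres, ← integral_indicator hBmeas]
    refine integral_congr_ae (Filter.Eventually.of_forall fun x => ?_)
    by_cases hx : x ∈ B
    · simp [hgdef, Set.indicator_of_mem hx]
    · simp [hgdef, Set.indicator_of_notMem hx]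
  rw [hint1, hcond]
  rw [hgint] at key
  rw [hAB] at hApos
  have := mul_le_mul_of_nonneg_left key (le_of_lt (inv_pos.2 hApos))
  calc ∫ x, f x ∂(Measure.pi μs)
      = (Measure.pi μs B).toReal⁻¹ *
        ((∫ x, f x ∂(Measure.pi μs)) * (Measure.pi μs B).toReal) := by
        field_simp
    _ ≤ (Measure.pi μs B).toReal⁻¹ * ∫ x, f x * g x ∂(Measure.pi μs) := this
    _ = (ℙ A).toReal⁻¹ * ∫ x, f x * g x ∂(Measure.pi μs) := by rw [hAB]
end

section
/- Let $r_1 < \mu < r_2$ with $P((-\infty,r_1))>0$ and $P([r_2,\infty))>0$, and define $Z^N_n$ as in the context. For fixed $N\ge 1$ and any $M\ge 1$ with $P\big(\bigcup_{n=1}^M \{Z^N_{2n}=-1\}\big)>0$, letting $b_N = P\big(Z^N_1\in\{1,-11\}\big)$, one has $P\Big(\bigcap_{n=1}^{2M}\{Z^N_n\in\{0,-1\}\}\,\Big|\,\bigcup_{n=1}^M\{Z^N_{2n}=-1\}\Big) \ge (1-b_N)^{2M}$. -/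
open MeasureTheory ProbabilityTheory Filter Real

open Classical in
/-- The indicator `Z^N_n` of the behaviour of the `n`-th block of length-`N` increments:
`1` if the block max is `≥ N r₂` and the block min is `≥ N r₁`, `-1` if the max is
`< N r₂` and the min is `< N r₁`, `-11` if the max is `≥ N r₂` and the min is `< N r₁`,
and `0` otherwise. -/
noncomputable def ZInd {Ω : Type*} (W : ℕ → Ω → ℝ) (r₁ r₂ : ℝ) (N n : ℕ) (ω : Ω) : ℤ :=
  if ∃ j < N, (N : ℝ) * r₂ ≤ seg W ((n - 1) * N + j) (n * N + j) ω then
    (if ∀ j < N, (N : ℝ) * r₁ ≤ seg W ((n - 1) * N + j) (n * N + j) ω then 1 else -11)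
  else
    (if ∀ j < N, (N : ℝ) * r₁ ≤ seg W ((n - 1) * N + j) (n * N + j) ω then 0 else -1)


lemma myIntegrable {α : Type*} [MeasurableSpace α] (μ : Measure α) [IsProbabilityMeasure μ]
    {f : α → ℝ} (hf : Measurable f) (h0 : ∀ x, 0 ≤ f x) (h1 : ∀ x, f x ≤ 1) :
    Integrable f μ := by
  refine Integrable.mono' (integrable_const 1) hf.aestronglyMeasurable ?_
  filter_upwards with x
  rw [Real.norm_eq_abs, abs_of_nonneg (h0 x)]; exact h1 x

lemma cheb1 (P : Measure ℝ) [IsProbabilityMeasure P] {f g : ℝ → ℝ}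
    (hf : Measurable f) (hg : Measurable g) (haf : Antitone f) (hag : Antitone g)
    (hf0 : ∀ x, 0 ≤ f x) (hf1 : ∀ x, f x ≤ 1) (hg0 : ∀ x, 0 ≤ g x) (hg1 : ∀ x, g x ≤ 1) :
    (∫ x, f x ∂P) * (∫ x, g x ∂P) ≤ ∫ x, f x * g x ∂P := by
  have hfg : Measurable (fun x => f x * g x) := hf.mul hg
  have hIf := myIntegrable P hf hf0 hf1
  have hIg := myIntegrable P hg hg0 hg1
  have hIfg := myIntegrable P hfg (fun x => mul_nonneg (hf0 x) (hg0 x))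
    (fun x => mul_le_one₀ (hf1 x) (hg0 x) (hg1 x))
  -- integrate over product
  have key : 0 ≤ ∫ p : ℝ × ℝ, (f p.1 - f p.2) * (g p.1 - g p.2) ∂(P.prod P) := by
    refine integral_nonneg fun p => ?_
    show (0:ℝ) ≤ (f p.1 - f p.2) * (g p.1 - g p.2)
    rcases le_total p.1 p.2 with h | h
    · exact mul_nonneg (by linarith [haf h]) (by linarith [hag h])
    · nlinarith [mul_nonneg (sub_nonneg.2 (haf h)) (sub_nonneg.2 (hag h))]
  have expand : ∫ p : ℝ × ℝ, (f p.1 - f p.2) * (g p.1 - g p.2) ∂(P.prod P)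
      = 2 * (∫ x, f x * g x ∂P) - 2 * ((∫ x, f x ∂P) * (∫ x, g x ∂P)) := by
    have h1 : ∀ p : ℝ × ℝ, (f p.1 - f p.2) * (g p.1 - g p.2)
        = f p.1 * g p.1 - f p.1 * g p.2 - f p.2 * g p.1 + f p.2 * g p.2 := by
      intro p; ring
    simp only [h1]
    have I1 : Integrable (fun p : ℝ × ℝ => f p.1 * g p.1) (P.prod P) :=
      myIntegrable _ ((hf.comp measurable_fst).mul (hg.comp measurable_fst))
        (fun p => mul_nonneg (hf0 _) (hg0 _))
        (fun p => mul_le_one₀ (hf1 _) (hg0 _) (hg1 _))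
    have I2 : Integrable (fun p : ℝ × ℝ => f p.1 * g p.2) (P.prod P) :=
      myIntegrable _ ((hf.comp measurable_fst).mul (hg.comp measurable_snd))
        (fun p => mul_nonneg (hf0 _) (hg0 _))
        (fun p => mul_le_one₀ (hf1 _) (hg0 _) (hg1 _))
    have I3 : Integrable (fun p : ℝ × ℝ => f p.2 * g p.1) (P.prod P) :=
      myIntegrable _ ((hf.comp measurable_snd).mul (hg.comp measurable_fst))
        (fun p => mul_nonneg (hf0 _) (hg0 _))
        (fun p => mul_le_one₀ (hf1 _) (hg0 _) (hg1 _))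
    have I4 : Integrable (fun p : ℝ × ℝ => f p.2 * g p.2) (P.prod P) :=
      myIntegrable _ ((hf.comp measurable_snd).mul (hg.comp measurable_snd))
        (fun p => mul_nonneg (hf0 _) (hg0 _))
        (fun p => mul_le_one₀ (hf1 _) (hg0 _) (hg1 _))
    have I12 : Integrable (fun p : ℝ × ℝ => f p.1 * g p.1 - f p.1 * g p.2) (P.prod P) := I1.sub I2
    have I123 : Integrable (fun p : ℝ × ℝ => f p.1 * g p.1 - f p.1 * g p.2 - f p.2 * g p.1)
      (P.prod P) := I12.sub I3
    rw [integral_add I123 I4, integral_sub I12 I3, integral_sub I1 I2]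
    have e1 : ∫ p : ℝ × ℝ, f p.1 * g p.1 ∂(P.prod P) = ∫ x, f x * g x ∂P := by
      rw [← integral_map measurable_fst.aemeasurable hfg.aestronglyMeasurable,
        Measure.map_fst_prod]; simp
    have e4 : ∫ p : ℝ × ℝ, f p.2 * g p.2 ∂(P.prod P) = ∫ x, f x * g x ∂P := by
      rw [← integral_map measurable_snd.aemeasurable hfg.aestronglyMeasurable,
        Measure.map_snd_prod]; simp
    have e2 : ∫ p : ℝ × ℝ, f p.1 * g p.2 ∂(P.prod P) = (∫ x, f x ∂P) * (∫ x, g x ∂P) := by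
      rw [← integral_prod_mul]
    have e3 : ∫ p : ℝ × ℝ, f p.2 * g p.1 ∂(P.prod P) = (∫ x, g x ∂P) * (∫ x, f x ∂P) := by
      rw [← integral_prod_mul (f := g) (g := f)]
      exact integral_congr_ae (Filter.Eventually.of_forall fun p => mul_comm _ _)
    rw [e1, e2, e3, e4]; ring
  linarith [key, expand.symm ▸ key]

lemma harris (P : Measure ℝ) [IsProbabilityMeasure P] :
    ∀ (k : ℕ) (f g : (Fin k → ℝ) → ℝ),
    Measurable f → Measurable g → Antitone f → Antitone g →
    (∀ x, 0 ≤ f x) → (∀ x, f x ≤ 1) → (∀ x, 0 ≤ g x) → (∀ x, g x ≤ 1) →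
    (∫ x, f x ∂(Measure.pi fun _ : Fin k => P)) * (∫ x, g x ∂(Measure.pi fun _ : Fin k => P))
      ≤ ∫ x, f x * g x ∂(Measure.pi fun _ : Fin k => P) := by
  intro k
  induction k with
  | zero =>
    intro f g _ _ _ _ hf0 hf1 _ _
    have hμ : IsProbabilityMeasure (Measure.pi fun _ : Fin 0 => P) := inferInstance
    have hfc : f = fun _ => f default := funext fun x => congrArg f (Subsingleton.elim x default)
    have hgc : g = fun _ => g default := funext fun x => congrArg g (Subsingleton.elim x default)
    rw [hfc, hgc]
    simp [measure_univ]
  | succ k ih =>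
    intro f g hf hg haf hag hf0 hf1 hg0 hg1
    set μk : Measure (Fin k → ℝ) := Measure.pi fun _ => P with hμk
    have : IsProbabilityMeasure μk := inferInstance
    set e := MeasurableEquiv.piFinSuccAbove (fun _ : Fin (k+1) => ℝ) 0 with he
    have hmp : MeasurePreserving e (Measure.pi fun _ : Fin (k+1) => P) (P.prod μk) := by
      exact measurePreserving_piFinSuccAbove (fun _ : Fin (k+1) => P) 0
    have hmps : MeasurePreserving e.symm (P.prod μk) (Measure.pi fun _ : Fin (k+1) => P) :=
      hmp.symm e
    have hcomp : ∀ (h : (Fin (k+1) → ℝ) → ℝ), Measurable h →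
        ∫ x, h x ∂(Measure.pi fun _ : Fin (k+1) => P)
          = ∫ p : ℝ × (Fin k → ℝ), h (e.symm p) ∂(P.prod μk) :=
      fun h hh => (hmps.integral_comp e.symm.measurableEmbedding h).symm
    -- monotonicity of e.symm
    have hesymm : ∀ (a : ℝ) (y : Fin k → ℝ), e.symm (a, y) = Fin.cons a y := by
      intro a y
      show (Fin.insertNthEquiv (fun _ : Fin (k+1) => ℝ) 0) (a, y) = Fin.cons a y
      simp [Fin.insertNthEquiv, Fin.insertNth_zero']
    have hmono : ∀ (a a' : ℝ) (y y' : Fin k → ℝ), a ≤ a' → y ≤ y' →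
        e.symm (a, y) ≤ e.symm (a', y') := by
      intro a a' y y' ha hy
      rw [hesymm, hesymm]
      intro i
      refine Fin.cases ?_ ?_ i
      · simpa using ha
      · intro j; simpa using hy j
    set f₁ : ℝ × (Fin k → ℝ) → ℝ := fun p => f (e.symm p) with hf₁
    set g₁ : ℝ × (Fin k → ℝ) → ℝ := fun p => g (e.symm p) with hg₁
    have hf₁m : Measurable f₁ := hf.comp e.symm.measurable
    have hg₁m : Measurable g₁ := hg.comp e.symm.measurable
    set F : ℝ → ℝ := fun a => ∫ y, f₁ (a, y) ∂μk with hF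
    set G : ℝ → ℝ := fun a => ∫ y, g₁ (a, y) ∂μk with hG
    have hFm : Measurable F := by
      have := (hf₁m.stronglyMeasurable.integral_prod_right' (ν := μk))
      exact this.measurable
    have hGm : Measurable G := (hg₁m.stronglyMeasurable.integral_prod_right' (ν := μk)).measurable
    have hF0 : ∀ a, 0 ≤ F a := fun a => integral_nonneg fun y => hf0 _
    have hG0 : ∀ a, 0 ≤ G a := fun a => integral_nonneg fun y => hg0 _
    have hIf₁ : ∀ a, Integrable (fun y => f₁ (a, y)) μk := fun a =>
      myIntegrable _ (hf₁m.comp (measurable_prodMk_left)) (fun y => hf0 _) (fun y => hf1 _)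
    have hIg₁ : ∀ a, Integrable (fun y => g₁ (a, y)) μk := fun a =>
      myIntegrable _ (hg₁m.comp (measurable_prodMk_left)) (fun y => hg0 _) (fun y => hg1 _)
    have hF1 : ∀ a, F a ≤ 1 := by
      intro a
      calc F a ≤ ∫ _ : (Fin k → ℝ), (1:ℝ) ∂μk :=
            integral_mono (hIf₁ a) (integrable_const 1) (fun y => hf1 _)
        _ = 1 := by simp
    have hG1 : ∀ a, G a ≤ 1 := by
      intro a
      calc G a ≤ ∫ _ : (Fin k → ℝ), (1:ℝ) ∂μk :=
            integral_mono (hIg₁ a) (integrable_const 1) (fun y => hg1 _)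
        _ = 1 := by simp
    have hFa : Antitone F := by
      intro a a' ha
      exact integral_mono (hIf₁ a') (hIf₁ a) (fun y => haf (hmono a a' y y ha le_rfl))
    have hGa : Antitone G := by
      intro a a' ha
      exact integral_mono (hIg₁ a') (hIg₁ a) (fun y => hag (hmono a a' y y ha le_rfl))
    -- rewrite the three integrals
    rw [hcomp f hf, hcomp g hg, hcomp (fun x => f x * g x) (hf.mul hg)]
    have hIfg₁ : Integrable (fun p => f₁ p * g₁ p) (P.prod μk) :=
      myIntegrable _ (hf₁m.mul hg₁m) (fun p => mul_nonneg (hf0 _) (hg0 _))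
        (fun p => mul_le_one₀ (hf1 _) (hg0 _) (hg1 _))
    have hIf₁' : Integrable f₁ (P.prod μk) := myIntegrable _ hf₁m (fun p => hf0 _) (fun p => hf1 _)
    have hIg₁' : Integrable g₁ (P.prod μk) := myIntegrable _ hg₁m (fun p => hg0 _) (fun p => hg1 _)
    rw [show (∫ p, f₁ p ∂(P.prod μk)) = ∫ a, F a ∂P from integral_prod f₁ hIf₁',
        show (∫ p, g₁ p ∂(P.prod μk)) = ∫ a, G a ∂P from integral_prod g₁ hIg₁',
        show (∫ p, f₁ p * g₁ p ∂(P.prod μk)) = ∫ a, ∫ y, f₁ (a,y) * g₁ (a,y) ∂μk ∂P from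
          integral_prod _ hIfg₁]
    have step1 : (∫ a, F a ∂P) * (∫ a, G a ∂P) ≤ ∫ a, F a * G a ∂P :=
      cheb1 P hFm hGm hFa hGa hF0 hF1 hG0 hG1
    have step2 : ∫ a, F a * G a ∂P ≤ ∫ a, ∫ y, f₁ (a,y) * g₁ (a,y) ∂μk ∂P := by
      refine integral_mono ?_ ?_ ?_
      · exact myIntegrable _ (hFm.mul hGm) (fun a => mul_nonneg (hF0 a) (hG0 a))
          (fun a => mul_le_one₀ (hF1 a) (hG0 a) (hG1 a))
      · refine myIntegrable _ ?_ (fun a => integral_nonneg fun y => mul_nonneg (hf0 _) (hg0 _)) ?_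
        · exact ((hf₁m.mul hg₁m).stronglyMeasurable.integral_prod_right' (ν := μk)).measurable
        · intro a
          calc (∫ y, f₁ (a,y) * g₁ (a,y) ∂μk) ≤ ∫ _ : (Fin k → ℝ), (1:ℝ) ∂μk := by
                refine integral_mono (myIntegrable _ ((hf₁m.mul hg₁m).comp measurable_prodMk_left)
                    (fun y => mul_nonneg (hf0 _) (hg0 _))
                    (fun y => mul_le_one₀ (hf1 _) (hg0 _) (hg1 _))) (integrable_const 1)
                  (fun y => mul_le_one₀ (hf1 _) (hg0 _) (hg1 _))
            _ = 1 := by simp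
      · intro a
        refine ih (fun y => f₁ (a, y)) (fun y => g₁ (a, y))
          (hf₁m.comp measurable_prodMk_left) (hg₁m.comp measurable_prodMk_left)
          (fun y y' hy => haf (hmono a a y y' le_rfl hy))
          (fun y y' hy => hag (hmono a a y y' le_rfl hy))
          (fun y => hf0 _) (fun y => hf1 _) (fun y => hg0 _) (fun y => hg1 _)
    linarith

lemma mapPi {Ω : Type*} [MeasureSpace Ω] [IsProbabilityMeasure (ℙ : Measure Ω)]
    (W : ℕ → Ω → ℝ) (hWmeas : ∀ n, Measurable (W n))
    (P : Measure ℝ) [IsProbabilityMeasure P]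
    (hlaw : ∀ n, Measure.map (W n) ℙ = P)
    (hindep : iIndepFun W ℙ)
    (t : ℕ) (u : Fin t → ℕ) (hu : Function.Injective u) :
    Measure.map (fun ω i => W (u i) ω) ℙ = Measure.pi (fun _ : Fin t => P) := by
  classical
  have hmeas : Measurable (fun ω (i : Fin t) => W (u i) ω) :=
    measurable_pi_lambda _ fun i => hWmeas _
  refine (Measure.pi_eq fun s hs => ?_).symm
  rw [Measure.map_apply hmeas (MeasurableSet.univ_pi hs)]
  set S : Finset ℕ := Finset.univ.map ⟨u, hu⟩ with hS
  set sets : ℕ → Set ℝ := fun m =>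
    if h : ∃ i, u i = m then s h.choose else Set.univ with hsets
  have hsets_eq : ∀ i, sets (u i) = s i := by
    intro i
    have h : ∃ i', u i' = u i := ⟨i, rfl⟩
    have : h.choose = i := hu h.choose_spec
    simp [hsets, dif_pos h, this]
  have hpre : (fun ω (i : Fin t) => W (u i) ω) ⁻¹' Set.pi Set.univ s
      = ⋂ m ∈ S, W m ⁻¹' sets m := by
    ext ω
    simp only [Set.mem_preimage, Set.mem_pi, Set.mem_univ, true_implies, Set.mem_iInter, hS,
      Finset.mem_map, Finset.mem_univ, Function.Embedding.coeFn_mk, true_and]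
    constructor
    · rintro h m ⟨i, rfl⟩
      rw [hsets_eq]; exact h i
    · intro h i
      have := h (u i) ⟨i, rfl⟩
      rwa [hsets_eq] at this
  rw [hpre, hindep.measure_inter_preimage_eq_mul S
      (fun m hm => by
        show MeasurableSet (if h : ∃ i, u i = m then s h.choose else Set.univ)
        split_ifs with h
        · exact hs _
        · exact MeasurableSet.univ)]
  rw [hS, Finset.prod_map]
  refine Finset.prod_congr rfl fun i _ => ?_
  rw [Function.Embedding.coeFn_mk, hsets_eq, ← hlaw (u i),
    Measure.map_apply (hWmeas _) (hs i)]

lemma harris_sets (P : Measure ℝ) [IsProbabilityMeasure P] (k : ℕ)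
    {s t : Set (Fin k → ℝ)} (hs : MeasurableSet s) (ht : MeasurableSet t)
    (hls : IsLowerSet s) (hlt : IsLowerSet t) :
    (Measure.pi fun _ : Fin k => P) s * (Measure.pi fun _ : Fin k => P) t
      ≤ (Measure.pi fun _ : Fin k => P) (s ∩ t) := by
  set μ := Measure.pi fun _ : Fin k => P with hμ
  have : IsProbabilityMeasure μ := inferInstance
  have hind : ∀ (A : Set (Fin k → ℝ)), IsLowerSet A →
      (Antitone (A.indicator (1 : (Fin k → ℝ) → ℝ)) ∧
       (∀ x, 0 ≤ A.indicator (1 : (Fin k → ℝ) → ℝ) x) ∧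
       (∀ x, A.indicator (1 : (Fin k → ℝ) → ℝ) x ≤ 1)) := by
    intro A hA
    refine ⟨fun x y hxy => ?_, fun x => Set.indicator_nonneg (fun _ _ => zero_le_one) x,
      fun x => Set.indicator_le_self' (fun _ _ => zero_le_one) x⟩
    by_cases hy : y ∈ A
    · have hx : x ∈ A := hA hxy hy
      simp [Set.indicator_of_mem, hx, hy]
    · simp only [Set.indicator_of_notMem hy]
      exact Set.indicator_nonneg (fun _ _ => zero_le_one) x
  obtain ⟨has, h0s, h1s⟩ := hind s hls
  obtain ⟨hat, h0t, h1t⟩ := hind t hlt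
  have key := harris P k (s.indicator 1) (t.indicator 1)
    (measurable_one.indicator hs) (measurable_one.indicator ht) has hat h0s h1s h0t h1t
  rw [integral_indicator_one hs, integral_indicator_one ht] at key
  have : ∫ x, s.indicator (1 : (Fin k → ℝ) → ℝ) x * t.indicator 1 x ∂μ = (μ (s ∩ t)).toReal := by
    change _ = μ.real (s ∩ t); rw [← integral_indicator_one (hs.inter ht)]
    refine integral_congr_ae (Filter.Eventually.of_forall fun x => ?_)
    rw [Set.inter_indicator_one]; rfl
  rw [this] at key
  calc μ s * μ t = ENNReal.ofReal ((μ s).toReal * (μ t).toReal) := by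
        rw [ENNReal.ofReal_mul ENNReal.toReal_nonneg, ENNReal.ofReal_toReal (measure_ne_top μ s),
          ENNReal.ofReal_toReal (measure_ne_top μ t)]
    _ ≤ ENNReal.ofReal ((μ (s ∩ t)).toReal) := ENNReal.ofReal_le_ofReal key
    _ = μ (s ∩ t) := ENNReal.ofReal_toReal (measure_ne_top μ _)

lemma harris_iInter (P : Measure ℝ) [IsProbabilityMeasure P] (k : ℕ)
    (S : Finset ℕ) (A : ℕ → Set (Fin k → ℝ))
    (hA : ∀ n ∈ S, MeasurableSet (A n)) (hl : ∀ n ∈ S, IsLowerSet (A n)) :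
    ∏ n ∈ S, (Measure.pi fun _ : Fin k => P) (A n)
      ≤ (Measure.pi fun _ : Fin k => P) (⋂ n ∈ S, A n) := by
  classical
  induction S using Finset.induction with
  | empty => simp
  | insert a S hnotmem ih =>
    have hAm : MeasurableSet (⋂ n ∈ S, A n) :=
      MeasurableSet.biInter S.countable_toSet (fun n hn => hA n (Finset.mem_insert_of_mem hn))
    have hAl : IsLowerSet (⋂ n ∈ S, A n) := by
      refine isLowerSet_iInter fun n => isLowerSet_iInter fun hn =>
        hl n (Finset.mem_insert_of_mem hn)
    rw [Finset.prod_insert hnotmem, Finset.set_biInter_insert]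
    calc (Measure.pi fun _ : Fin k => P) (A a) * ∏ n ∈ S, (Measure.pi fun _ : Fin k => P) (A n)
        ≤ (Measure.pi fun _ : Fin k => P) (A a) * (Measure.pi fun _ : Fin k => P) (⋂ n ∈ S, A n) :=
          mul_le_mul_right (ih (fun n hn => hA n (Finset.mem_insert_of_mem hn))
            (fun n hn => hl n (Finset.mem_insert_of_mem hn))) _
      _ ≤ (Measure.pi fun _ : Fin k => P) (A a ∩ ⋂ n ∈ S, A n) :=
          harris_sets P k (hA a (Finset.mem_insert_self a S)) hAm
            (hl a (Finset.mem_insert_self a S)) hAl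

/-- extension of a finite tuple to ℕ-indexed steps -/
noncomputable def extTup (t : ℕ) : ℕ → (Fin t → ℝ) → ℝ :=
  fun m x => if h : m < t then x ⟨m, h⟩ else 0

lemma extTup_meas (t m : ℕ) : Measurable (extTup t m) := by
  unfold extTup
  split_ifs with h
  · exact measurable_pi_apply _
  · exact measurable_const

lemma seg_extTupTup_meas (t j k : ℕ) : Measurable (fun x => seg (extTup t) j k x) := by
  unfold seg
  exact Finset.measurable_sum _ fun m _ => extTup_meas t m

lemma seg_extTup_mono (t j k : ℕ) : Monotone (fun x => seg (extTup t) j k x) := by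
  intro x y hxy
  refine Finset.sum_le_sum fun m _ => ?_
  unfold extTup
  split_ifs with h
  · exact hxy _
  · exact le_refl _

lemma seg_extTup_eq {Ω : Type*} (W : ℕ → Ω → ℝ) (t a j k : ℕ) (hk : k ≤ t) (ω : Ω) :
    seg (extTup t) j k (fun i : Fin t => W (a + i.val) ω) = seg W (a + j) (a + k) ω := by
  unfold seg
  rw [← Finset.map_add_left_Ico, Finset.sum_map]
  refine Finset.sum_congr rfl fun m hm => ?_
  have hmk : m < t := lt_of_lt_of_le (Finset.mem_Ico.mp hm).2 hk
  simp only [addLeftEmbedding_apply]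
  unfold extTup
  rw [dif_pos hmk]

-- set characterizations of ZInd values
lemma Zset_max {Ω : Type*} (W : ℕ → Ω → ℝ) (r₁ r₂ : ℝ) (N n : ℕ) :
    {ω | ZInd W r₁ r₂ N n ω = 1 ∨ ZInd W r₁ r₂ N n ω = -11}
      = {ω | ∃ j < N, (N : ℝ) * r₂ ≤ seg W ((n - 1) * N + j) (n * N + j) ω} := by
  ext ω
  simp only [Set.mem_setOf_eq, ZInd]
  split_ifs with h1 h2 h2 <;> simp [h1]

lemma Zset_nomax {Ω : Type*} (W : ℕ → Ω → ℝ) (r₁ r₂ : ℝ) (N n : ℕ) :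
    {ω | ZInd W r₁ r₂ N n ω = 0 ∨ ZInd W r₁ r₂ N n ω = -1}
      = {ω | ¬ ∃ j < N, (N : ℝ) * r₂ ≤ seg W ((n - 1) * N + j) (n * N + j) ω} := by
  ext ω
  simp only [Set.mem_setOf_eq, ZInd]
  split_ifs with h1 h2 h2 <;> simp [h1]

lemma Zset_neg1 {Ω : Type*} (W : ℕ → Ω → ℝ) (r₁ r₂ : ℝ) (N n : ℕ) :
    {ω | ZInd W r₁ r₂ N n ω = -1}
      = {ω | (¬ ∃ j < N, (N : ℝ) * r₂ ≤ seg W ((n - 1) * N + j) (n * N + j) ω)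
          ∧ ¬ ∀ j < N, (N : ℝ) * r₁ ≤ seg W ((n - 1) * N + j) (n * N + j) ω} := by
  ext ω
  simp only [Set.mem_setOf_eq, ZInd]
  split_ifs with h1 h2 h2 <;> simp [h1, h2] <;> try exact h2

lemma max_set_meas (t : ℕ) (c : ℝ) (N a b : ℕ) :
    MeasurableSet {x : Fin t → ℝ | ∃ j < N, c ≤ seg (extTup t) (a + j) (b + j) x} := by
  have : {x : Fin t → ℝ | ∃ j < N, c ≤ seg (extTup t) (a + j) (b + j) x}
      = ⋃ j ∈ Finset.range N, {x | c ≤ seg (extTup t) (a + j) (b + j) x} := by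
    ext x; simp
  rw [this]
  exact MeasurableSet.biUnion (Finset.range N).countable_toSet
    (fun j _ => measurableSet_le measurable_const (seg_extTupTup_meas t _ _))

lemma min_set_meas (t : ℕ) (c : ℝ) (N a b : ℕ) :
    MeasurableSet {x : Fin t → ℝ | ∀ j < N, c ≤ seg (extTup t) (a + j) (b + j) x} := by
  have : {x : Fin t → ℝ | ∀ j < N, c ≤ seg (extTup t) (a + j) (b + j) x}
      = ⋂ j ∈ Finset.range N, {x | c ≤ seg (extTup t) (a + j) (b + j) x} := by
    ext x; simp
  rw [this]
  exact MeasurableSet.biInter (Finset.range N).countable_toSet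
    (fun j _ => measurableSet_le measurable_const (seg_extTupTup_meas t _ _))

lemma ZextTup_nomax_meas (t : ℕ) (r₁ r₂ : ℝ) (N n : ℕ) :
    MeasurableSet {x : Fin t → ℝ | ZInd (extTup t) r₁ r₂ N n x = 0 ∨ ZInd (extTup t) r₁ r₂ N n x = -1} := by
  rw [Zset_nomax]
  have : {x : Fin t → ℝ | ¬ ∃ j < N, (N : ℝ) * r₂ ≤ seg (extTup t) ((n-1)*N + j) (n*N + j) x}
      = {x : Fin t → ℝ | ∃ j < N, (N : ℝ) * r₂ ≤ seg (extTup t) ((n-1)*N + j) (n*N + j) x}ᶜ := rfl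
  rw [this]
  exact (max_set_meas t _ N _ _).compl

lemma ZextTup_nomax_lower (t : ℕ) (r₁ r₂ : ℝ) (N n : ℕ) :
    IsLowerSet {x : Fin t → ℝ | ZInd (extTup t) r₁ r₂ N n x = 0 ∨ ZInd (extTup t) r₁ r₂ N n x = -1} := by
  rw [Zset_nomax]
  intro x y hyx hx
  simp only [Set.mem_setOf_eq] at hx ⊢
  intro ⟨j, hj, hc⟩
  exact hx ⟨j, hj, le_trans hc (seg_extTup_mono t _ _ hyx)⟩

lemma ZextTup_neg1_meas (t : ℕ) (r₁ r₂ : ℝ) (N n : ℕ) :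
    MeasurableSet {x : Fin t → ℝ | ZInd (extTup t) r₁ r₂ N n x = -1} := by
  rw [Zset_neg1]
  have : {x : Fin t → ℝ | (¬ ∃ j < N, (N : ℝ) * r₂ ≤ seg (extTup t) ((n-1)*N + j) (n*N + j) x)
          ∧ ¬ ∀ j < N, (N : ℝ) * r₁ ≤ seg (extTup t) ((n-1)*N + j) (n*N + j) x}
      = {x : Fin t → ℝ | ∃ j < N, (N : ℝ) * r₂ ≤ seg (extTup t) ((n-1)*N + j) (n*N + j) x}ᶜ
        ∩ {x : Fin t → ℝ | ∀ j < N, (N : ℝ) * r₁ ≤ seg (extTup t) ((n-1)*N + j) (n*N + j) x}ᶜ := rfl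
  rw [this]
  exact ((max_set_meas t _ N _ _).compl).inter ((min_set_meas t _ N _ _).compl)

lemma ZextTup_neg1_lower (t : ℕ) (r₁ r₂ : ℝ) (N n : ℕ) :
    IsLowerSet {x : Fin t → ℝ | ZInd (extTup t) r₁ r₂ N n x = -1} := by
  rw [Zset_neg1]
  intro x y hyx hx
  simp only [Set.mem_setOf_eq] at hx ⊢
  obtain ⟨h1, h2⟩ := hx
  constructor
  · intro ⟨j, hj, hc⟩
    exact h1 ⟨j, hj, le_trans hc (seg_extTup_mono t _ _ hyx)⟩
  · intro hall
    exact h2 fun j hj => le_trans (hall j hj) (seg_extTup_mono t _ _ hyx)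

-- transfer from Ω to the canonical space
lemma ZInd_transfer {Ω : Type*} (W : ℕ → Ω → ℝ) (r₁ r₂ : ℝ) (N : ℕ) (t n : ℕ)
    (hn : 1 ≤ n) (hfit : n * N + N ≤ t) (ω : Ω) :
    ZInd W r₁ r₂ N n ω = ZInd (extTup t) r₁ r₂ N n (fun i : Fin t => W i.val ω) := by
  have hseg : ∀ j, j < N → seg (extTup t) ((n-1)*N + j) (n*N + j) (fun i : Fin t => W i.val ω)
      = seg W ((n-1)*N + j) (n*N + j) ω := by
    intro j hj
    have h0 : (fun i : Fin t => W i.val ω) = (fun i : Fin t => W (0 + i.val) ω) := by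
      funext i; rw [Nat.zero_add]
    rw [h0, seg_extTup_eq W t 0 ((n-1)*N + j) (n*N + j) (by omega) ω, Nat.zero_add, Nat.zero_add]
  have e1 : (∃ j < N, (N : ℝ) * r₂ ≤ seg W ((n-1)*N + j) (n*N + j) ω)
      ↔ (∃ j < N, (N : ℝ) * r₂ ≤ seg (extTup t) ((n-1)*N + j) (n*N + j) (fun i : Fin t => W i.val ω)) := by
    refine exists_congr fun j => and_congr_right fun hj => ?_
    rw [hseg j hj]
  have e2 : (∀ j < N, (N : ℝ) * r₁ ≤ seg W ((n-1)*N + j) (n*N + j) ω)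
      ↔ (∀ j < N, (N : ℝ) * r₁ ≤ seg (extTup t) ((n-1)*N + j) (n*N + j) (fun i : Fin t => W i.val ω)) := by
    refine forall_congr' fun j => imp_congr_right fun hj => ?_
    rw [hseg j hj]
  unfold ZInd
  by_cases h1 : ∃ j < N, (N : ℝ) * r₂ ≤ seg W ((n-1)*N + j) (n*N + j) ω <;>
    by_cases h2 : ∀ j < N, (N : ℝ) * r₁ ≤ seg W ((n-1)*N + j) (n*N + j) ω <;>
      simp [h1, h2, e1.symm, e2.symm, (e1.not).symm, (e2.not).symm] <;>
        simp [if_pos, if_neg, (e1.mp h1), fun h => h2 (e2.mpr h), h1, h2, e1, e2]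

theorem stmt17
    {Ω : Type*} [MeasureSpace Ω] [IsProbabilityMeasure (ℙ : Measure Ω)]
    (W : ℕ → Ω → ℝ) (hWmeas : ∀ n, Measurable (W n))
    (P : Measure ℝ) [IsProbabilityMeasure P]
    (hlaw : ∀ n, Measure.map (W n) ℙ = P)
    (hindep : iIndepFun W ℙ)
    (μ : ℝ) (hμ : μ = ∫ x, x ∂P)
    (r₁ r₂ : ℝ) (hr₁ : r₁ < μ) (hr₂ : μ < r₂)
    (hP₁ : 0 < P (Set.Iio r₁)) (hP₂ : 0 < P (Set.Ici r₂))
    (N : ℕ) (hN : 1 ≤ N) (M : ℕ) (hM : 1 ≤ M)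
    (hpos : 0 < ℙ (⋃ n ∈ Finset.Icc 1 M, {ω | ZInd W r₁ r₂ N (2 * n) ω = -1})) :
    ENNReal.ofReal
        ((1 - (ℙ {ω | ZInd W r₁ r₂ N 1 ω = 1 ∨ ZInd W r₁ r₂ N 1 ω = -11}).toReal) ^ (2 * M)) ≤
      ℙ[|⋃ n ∈ Finset.Icc 1 M, {ω | ZInd W r₁ r₂ N (2 * n) ω = -1}]
        (⋂ n ∈ Finset.Icc 1 (2 * M),
          {ω | ZInd W r₁ r₂ N n ω = 0 ∨ ZInd W r₁ r₂ N n ω = -1}) := by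
  classical
  set K := (2 * M + 1) * N with hK
  set φ : Ω → (Fin K → ℝ) := fun ω i => W i.val ω with hφ
  have hφmeas : Measurable φ := measurable_pi_lambda _ fun i => hWmeas _
  have hmap : Measure.map φ ℙ = Measure.pi (fun _ : Fin K => P) :=
    mapPi W hWmeas P hlaw hindep K (fun i => i.val) Fin.val_injective
  set μpi : Measure (Fin K → ℝ) := Measure.pi (fun _ : Fin K => P) with hμpi
  set A : Set Ω := ⋂ n ∈ Finset.Icc 1 (2 * M),
    {ω | ZInd W r₁ r₂ N n ω = 0 ∨ ZInd W r₁ r₂ N n ω = -1} with hA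
  set B : Set Ω := ⋃ n ∈ Finset.Icc 1 M, {ω | ZInd W r₁ r₂ N (2 * n) ω = -1} with hB
  set CA : ℕ → Set (Fin K → ℝ) := fun n =>
    {x | ZInd (extTup K) r₁ r₂ N n x = 0 ∨ ZInd (extTup K) r₁ r₂ N n x = -1} with hCA
  set A' : Set (Fin K → ℝ) := ⋂ n ∈ Finset.Icc 1 (2 * M), CA n with hA'
  set B' : Set (Fin K → ℝ) :=
    ⋃ n ∈ Finset.Icc 1 M, {x | ZInd (extTup K) r₁ r₂ N (2 * n) x = -1} with hB'
  have hfit : ∀ n, n ≤ 2 * M → n * N + N ≤ K := by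
    intro n hn
    calc n * N + N = (n + 1) * N := (Nat.succ_mul n N).symm
      _ ≤ (2 * M + 1) * N := Nat.mul_le_mul_right N (by omega)
  -- transfer of events
  have htrans : ∀ n, 1 ≤ n → n ≤ 2 * M →
      {ω | ZInd W r₁ r₂ N n ω = 0 ∨ ZInd W r₁ r₂ N n ω = -1} = φ ⁻¹' CA n := by
    intro n h1 h2
    ext ω
    simp only [Set.mem_preimage, Set.mem_setOf_eq, hCA]
    rw [ZInd_transfer W r₁ r₂ N K n h1 (hfit n h2)]
  have htransB : ∀ n, 1 ≤ n → n ≤ M →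
      {ω | ZInd W r₁ r₂ N (2 * n) ω = -1}
        = φ ⁻¹' {x | ZInd (extTup K) r₁ r₂ N (2 * n) x = -1} := by
    intro n h1 h2
    ext ω
    simp only [Set.mem_preimage, Set.mem_setOf_eq]
    rw [ZInd_transfer W r₁ r₂ N K (2 * n) (by omega) (hfit (2 * n) (by omega))]
  have hAeq : A = φ ⁻¹' A' := by
    rw [hA, hA', Set.preimage_iInter₂]
    refine Set.iInter₂_congr fun n hn => ?_
    rw [Finset.mem_Icc] at hn
    exact htrans n hn.1 hn.2
  have hBeq : B = φ ⁻¹' B' := by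
    rw [hB, hB', Set.preimage_iUnion₂]
    refine Set.iUnion₂_congr fun n hn => ?_
    rw [Finset.mem_Icc] at hn
    exact htransB n hn.1 hn.2
  have hA'm : MeasurableSet A' :=
    MeasurableSet.biInter (Finset.Icc 1 (2*M)).countable_toSet
      (fun n _ => ZextTup_nomax_meas K r₁ r₂ N n)
  have hA'l : IsLowerSet A' :=
    isLowerSet_iInter fun n => isLowerSet_iInter fun _ => ZextTup_nomax_lower K r₁ r₂ N n
  have hB'm : MeasurableSet B' :=
    MeasurableSet.biUnion (Finset.Icc 1 M).countable_toSet
      (fun n _ => ZextTup_neg1_meas K r₁ r₂ N (2 * n))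
  have hB'l : IsLowerSet B' :=
    isLowerSet_iUnion fun n => isLowerSet_iUnion fun _ => ZextTup_neg1_lower K r₁ r₂ N (2 * n)
  have hmapply : ∀ (s : Set (Fin K → ℝ)), MeasurableSet s → ℙ (φ ⁻¹' s) = μpi s := by
    intro s hs
    rw [← hmap, Measure.map_apply hφmeas hs]
  have hPA : ℙ A = μpi A' := by rw [hAeq]; exact hmapply A' hA'm
  have hPB : ℙ B = μpi B' := by rw [hBeq]; exact hmapply B' hB'm
  have hPBA : ℙ (B ∩ A) = μpi (B' ∩ A') := by
    rw [hBeq, hAeq, ← Set.preimage_inter]; exact hmapply _ (hB'm.inter hA'm)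
  have hAm : MeasurableSet A := by rw [hAeq]; exact hφmeas hA'm
  have hBm : MeasurableSet B := by rw [hBeq]; exact hφmeas hB'm
  -- the probability of having a max, independent of n
  set β : ENNReal := ℙ {ω | ZInd W r₁ r₂ N 1 ω = 1 ∨ ZInd W r₁ r₂ N 1 ω = -11} with hβ
  set F : Set (Fin (2 * N) → ℝ) :=
    {y | ∃ j < N, (N : ℝ) * r₂ ≤ seg (extTup (2 * N)) (0 + j) (N + j) y} with hF
  have hFm : MeasurableSet F := max_set_meas (2 * N) ((N : ℝ) * r₂) N 0 N
  have hwin : ∀ n, 1 ≤ n →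
      ℙ {ω | ZInd W r₁ r₂ N n ω = 1 ∨ ZInd W r₁ r₂ N n ω = -11}
        = (Measure.pi fun _ : Fin (2 * N) => P) F := by
    intro n hn
    set ψ : Ω → (Fin (2 * N) → ℝ) := fun ω i => W ((n - 1) * N + i.val) ω with hψ
    have hu : Function.Injective (fun i : Fin (2 * N) => (n - 1) * N + i.val) := by
      intro i j hij
      simp only at hij
      exact Fin.val_injective (Nat.add_left_cancel hij)
    have hmapψ : Measure.map ψ ℙ = Measure.pi (fun _ : Fin (2 * N) => P) :=
      mapPi W hWmeas P hlaw hindep (2 * N) _ hu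
    have hψmeas : Measurable ψ := measurable_pi_lambda _ fun i => hWmeas _
    have hset : {ω | ZInd W r₁ r₂ N n ω = 1 ∨ ZInd W r₁ r₂ N n ω = -11} = ψ ⁻¹' F := by
      rw [Zset_max]
      ext ω
      simp only [Set.mem_preimage, Set.mem_setOf_eq, hF]
      refine exists_congr fun j => and_congr_right fun hj => ?_
      have hseg : seg (extTup (2 * N)) (0 + j) (N + j) (ψ ω)
          = seg W ((n - 1) * N + j) (n * N + j) ω := by
        rw [Nat.zero_add]
        have := seg_extTup_eq W (2 * N) ((n - 1) * N) j (N + j) (by omega) ω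
        rw [hψ]
        rw [this]
        congr 1
        have h1 : (n - 1) * N + N = n * N := by
          rw [← Nat.succ_mul]
          congr 1
          omega
        omega
      rw [hseg]
    rw [hset, ← hmapψ, Measure.map_apply hψmeas hFm]
  -- each CA n has probability 1 - β
  have hCAn : ∀ n, 1 ≤ n → n ≤ 2 * M → μpi (CA n) = 1 - β := by
    intro n h1 h2
    have hc : {ω | ZInd W r₁ r₂ N n ω = 0 ∨ ZInd W r₁ r₂ N n ω = -1}
        = {ω | ZInd W r₁ r₂ N n ω = 1 ∨ ZInd W r₁ r₂ N n ω = -11}ᶜ := by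
      rw [Zset_nomax, Zset_max]; rfl
    have hmeas : MeasurableSet {ω | ZInd W r₁ r₂ N n ω = 1 ∨ ZInd W r₁ r₂ N n ω = -11} := by
      have : {ω | ZInd W r₁ r₂ N n ω = 0 ∨ ZInd W r₁ r₂ N n ω = -1} = φ ⁻¹' CA n :=
        htrans n h1 h2
      have h' : {ω | ZInd W r₁ r₂ N n ω = 1 ∨ ZInd W r₁ r₂ N n ω = -11}
          = (φ ⁻¹' CA n)ᶜ := by
        rw [← this, hc, compl_compl]
      rw [h']
      exact (hφmeas (ZextTup_nomax_meas K r₁ r₂ N n)).compl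
    rw [← hmapply (CA n) (ZextTup_nomax_meas K r₁ r₂ N n), ← htrans n h1 h2, hc,
      prob_compl_eq_one_sub hmeas, hwin n h1, ← hwin 1 le_rfl, ← hβ]
  have hβ1 : β ≤ 1 := prob_le_one
  -- product bound
  have hprod : (1 - β) ^ (2 * M) ≤ μpi A' := by
    have := harris_iInter P K (Finset.Icc 1 (2 * M)) CA
      (fun n _ => ZextTup_nomax_meas K r₁ r₂ N n)
      (fun n _ => ZextTup_nomax_lower K r₁ r₂ N n)
    rw [← hμpi] at this
    rw [hA']
    refine le_trans (le_of_eq ?_) this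
    have hcard : (Finset.Icc 1 (2 * M)).card = 2 * M := by rw [Nat.card_Icc]; omega
    calc (1 - β) ^ (2 * M) = ∏ _n ∈ Finset.Icc 1 (2 * M), (1 - β) := by
          rw [Finset.prod_const, hcard]
      _ = ∏ n ∈ Finset.Icc 1 (2 * M), μpi (CA n) :=
          Finset.prod_congr rfl fun n hn => by
            rw [Finset.mem_Icc] at hn
            exact (hCAn n hn.1 hn.2).symm
  -- conversion of ofReal
  have hofReal : ENNReal.ofReal ((1 - β.toReal) ^ (2 * M)) = (1 - β) ^ (2 * M) := by
    have hβtop : β ≠ ⊤ := (lt_of_le_of_lt hβ1 ENNReal.one_lt_top).ne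
    have hβr : β.toReal ≤ 1 := by
      rw [← ENNReal.toReal_one]
      exact ENNReal.toReal_mono ENNReal.one_ne_top hβ1
    rw [ENNReal.ofReal_pow (by linarith)]
    congr 1
    rw [← ENNReal.ofReal_one, ← ENNReal.ofReal_toReal hβtop,
      ← ENNReal.ofReal_sub _ ENNReal.toReal_nonneg]
    simp
  -- Harris for the pair
  have hpair : ℙ B * ℙ A ≤ ℙ (B ∩ A) := by
    rw [hPA, hPB, hPBA]
    exact harris_sets P K hB'm hA'm hB'l hA'l
  rw [cond_apply hBm]
  calc ENNReal.ofReal ((1 - β.toReal) ^ (2 * M)) = (1 - β) ^ (2 * M) := hofReal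
    _ ≤ μpi A' := hprod
    _ = ℙ A := hPA.symm
    _ = (ℙ B)⁻¹ * (ℙ B * ℙ A) := by
        rw [← mul_assoc, ENNReal.inv_mul_cancel hpos.ne' (measure_ne_top _ _), one_mul]
    _ ≤ (ℙ B)⁻¹ * ℙ (B ∩ A) := mul_le_mul_right hpair _
end
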